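/- arXiv:1801.06390 — 5 statements merged into one kernel-verified Lean document; each statement's English description precedes it below -/
import Mathlib

section
/- (Weber's second exponential integral.) For all real a > 0, c > 0 and q > 0, ∫_0^∞ x·e^{−a²x²}·J₀(c·x)·J₀(q·x) dx = (1/(2a²))·exp(−(q² + c²)/(4a²))·I₀(q·c/(2a²)). -/
open MeasureTheory Real Set
open scoped Nat

/-- The Bessel function of the first kind of order zero, defined by its
everywhere-convergent power series. -/
noncomputable def besselJ0 (x : ℝ) : ℝ :=
  ∑' m : ℕ, (-1 : ℝ) ^ m * (x / 2) ^ (2 * m) / (Nat.factorial m : ℝ) ^ 2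

/-- The modified Bessel function of the first kind of order zero. -/
noncomputable def besselI0 (x : ℝ) : ℝ :=
  ∑' m : ℕ, (x / 2) ^ (2 * m) / (Nat.factorial m : ℝ) ^ 2

lemma fact_ne (n : ℕ) : ((n ! : ℝ)) ≠ 0 := by
  exact_mod_cast (Nat.factorial_pos n).ne'

lemma one_le_fact (n : ℕ) : (1:ℝ) ≤ (n ! : ℝ) := by
  exact_mod_cast Nat.one_le_iff_ne_zero.mpr (Nat.factorial_ne_zero n)

lemma summable_abs_div_sq (t : ℝ) : Summable fun m : ℕ => |t| ^ m / (m ! : ℝ) ^ 2 := by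
  refine Summable.of_nonneg_of_le (fun m => by positivity) (fun m => ?_)
    (Real.summable_pow_div_factorial |t|)
  have h1 : (1:ℝ) ≤ (m ! : ℝ) := one_le_fact m
  have h2 : (m ! : ℝ) ≤ (m ! : ℝ) ^ 2 := by nlinarith
  gcongr

open Finset in
lemma choose_mul_choose_sum (m n : ℕ) :
    ∑ k ∈ range (n + 1), m.choose k * n.choose k = (m + n).choose n := by
  rw [Nat.add_choose_eq, Finset.Nat.sum_antidiagonal_eq_sum_range_succ_mk]
  refine Finset.sum_congr rfl fun k hk => ?_
  rw [Nat.choose_symm (Nat.lt_succ_iff.mp (Finset.mem_range.mp hk))]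

lemma inv_fact_sum (m n : ℕ) :
    ∑ k ∈ Finset.range (min m n + 1),
      (1:ℝ) / ((k ! :ℝ)^2 * ((m-k)! : ℝ) * ((n-k)! : ℝ))
      = ((m+n)! : ℝ) / ((m ! :ℝ)^2 * (n ! :ℝ)^2) := by
  have key : ∀ k ∈ Finset.range (min m n + 1),
      (1:ℝ) / ((k ! :ℝ)^2 * ((m-k)! : ℝ) * ((n-k)! : ℝ))
      = ((m.choose k * n.choose k : ℕ) : ℝ) / ((m ! : ℝ) * (n ! : ℝ)) := by
    intro k hk
    have hkm : k ≤ m := by simp only [Finset.mem_range] at hk; omega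
    have hkn : k ≤ n := by simp only [Finset.mem_range] at hk; omega
    rw [Nat.cast_mul, Nat.cast_choose ℝ hkm, Nat.cast_choose ℝ hkn]
    have h1 := fact_ne k; have h2 := fact_ne (m-k); have h3 := fact_ne (n-k)
    have h4 := fact_ne m; have h5 := fact_ne n
    field_simp
  rw [Finset.sum_congr rfl key, ← Finset.sum_div, ← Nat.cast_sum]
  have hsub : ∑ k ∈ Finset.range (min m n + 1), m.choose k * n.choose k
      = ∑ k ∈ Finset.range (n + 1), m.choose k * n.choose k := by
    apply Finset.sum_subset
    · intro k hk; simp only [Finset.mem_range] at *; omega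
    · intro k hk hk'
      simp only [Finset.mem_range] at hk hk'
      have : m < k := by omega
      simp [Nat.choose_eq_zero_of_lt this]
  rw [hsub, choose_mul_choose_sum m n, Nat.cast_choose ℝ (Nat.le_add_left n m), Nat.add_sub_cancel]
  have h4 := fact_ne m; have h5 := fact_ne n; have h6 := fact_ne (m+n)
  field_simp

lemma exp_tsum (x : ℝ) : Real.exp x = ∑' n : ℕ, x ^ n / n ! := by
  rw [Real.exp_eq_exp_ℝ, NormedSpace.exp_eq_tsum_div]

noncomputable def wf (u v : ℝ) (k : ℕ) : ℝ := (u*v)^k / (k ! : ℝ)^2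
noncomputable def wg (v : ℝ) (i : ℕ) : ℝ := (-v)^i / (i ! : ℝ)
noncomputable def wH (u v : ℝ) (z : (ℕ × ℕ) × ℕ) : ℝ :=
  if z.2 ≤ z.1.1 ∧ z.2 ≤ z.1.2 then
    wf u v z.2 * (wg v (z.1.1 - z.2) * wg u (z.1.2 - z.2)) else 0

lemma summable_norm_wf (u v : ℝ) : Summable fun k => ‖wf u v k‖ := by
  refine (summable_abs_div_sq (u*v)).congr fun k => ?_
  rw [wf, Real.norm_eq_abs, abs_div, abs_pow, abs_of_nonneg (by positivity : (0:ℝ) ≤ (k ! :ℝ)^2)]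

lemma summable_norm_wg (v : ℝ) : Summable fun i => ‖wg v i‖ := by
  refine (Real.summable_pow_div_factorial |(-v)|).congr fun i => ?_
  rw [wg, Real.norm_eq_abs, abs_div, abs_pow, abs_of_nonneg (by positivity : (0:ℝ) ≤ (i ! :ℝ))]

lemma tsum_wg (v : ℝ) : ∑' i, wg v i = Real.exp (-v) := (exp_tsum (-v)).symm

def we (r : ℕ × ℕ × ℕ) : (ℕ × ℕ) × ℕ := ((r.1 + r.2.1, r.1 + r.2.2), r.1)

lemma we_inj : Function.Injective we := by
  rintro ⟨k,i,j⟩ ⟨k',i',j'⟩ hh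
  simp only [we, Prod.mk.injEq] at hh
  simp only [Prod.mk.injEq]
  omega

set_option maxHeartbeats 1000000 in
lemma core_identity (u v : ℝ) :
    (∑' p : ℕ × ℕ,
      (-1:ℝ)^(p.1+p.2) * v^p.1 * u^p.2 * ((p.1+p.2)! : ℝ) / ((p.1 ! :ℝ)^2 * (p.2 ! :ℝ)^2))
      = Real.exp (-(u+v)) * ∑' k : ℕ, (u*v)^k / (k ! :ℝ)^2 := by
  classical
  have hfn := summable_norm_wf u v
  have hgn := summable_norm_wg v
  have hhn := summable_norm_wg u
  have hghn : Summable fun p : ℕ × ℕ => ‖wg v p.1 * wg u p.2‖ := hgn.mul_norm hhn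
  have hGn : Summable fun r : ℕ × ℕ × ℕ => ‖wf u v r.1 * (wg v r.2.1 * wg u r.2.2)‖ :=
    hfn.mul_norm hghn
  have hG : Summable fun r : ℕ × ℕ × ℕ => wf u v r.1 * (wg v r.2.1 * wg u r.2.2) := hGn.of_norm
  have hHe : ∀ r : ℕ × ℕ × ℕ, wH u v (we r) = wf u v r.1 * (wg v r.2.1 * wg u r.2.2) := by
    rintro ⟨k,i,j⟩
    simp only [wH, we]
    simp only [Nat.le_add_right, and_self, ↓reduceIte]
    simp [Nat.add_sub_cancel_left]
  have hsupp : ∀ z ∉ Set.range we, wH u v z = 0 := by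
    rintro ⟨⟨m,n⟩,k⟩ hz
    by_contra hne
    apply hz
    have hcond : k ≤ m ∧ k ≤ n := by
      by_contra hcon
      exact hne (if_neg hcon)
    exact ⟨(k, m - k, n - k), by
      simp only [we, Prod.mk.injEq]
      exact ⟨⟨by omega, by omega⟩, trivial⟩⟩
  have hsupp' : Function.support (wH u v) ⊆ Set.range we :=
    Function.support_subset_iff'.mpr hsupp
  have hH : Summable (wH u v) := by
    refine (we_inj.summable_iff hsupp).mp ?_
    exact hG.congr fun r => (hHe r).symm
  have hHG : ∑' z, wH u v z = ∑' r : ℕ × ℕ × ℕ, wf u v r.1 * (wg v r.2.1 * wg u r.2.2) := by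
    rw [← we_inj.tsum_eq hsupp']
    exact tsum_congr hHe
  have hfin : ∀ p : ℕ × ℕ, (∑' k, wH u v (p, k))
      = (-1:ℝ)^(p.1+p.2) * v^p.1 * u^p.2 * ((p.1+p.2)! : ℝ) / ((p.1 ! :ℝ)^2 * (p.2 ! :ℝ)^2) := by
    rintro ⟨m,n⟩
    rw [tsum_eq_sum (s := Finset.range (min m n + 1)) (fun k hk => by
      have : ¬(k ≤ m ∧ k ≤ n) := by
        simp only [Finset.mem_range] at hk; omega
      simp only [wH]
      exact if_neg this)]
    have hsum : ∀ k ∈ Finset.range (min m n + 1),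
        wH u v ((m,n),k) = ((-1:ℝ)^(m+n) * v^m * u^n)
          * ((1:ℝ) / ((k ! :ℝ)^2 * ((m-k)! : ℝ) * ((n-k)! : ℝ))) := by
      intro k hk
      have hkm : k ≤ m := by simp only [Finset.mem_range] at hk; omega
      have hkn : k ≤ n := by simp only [Finset.mem_range] at hk; omega
      simp only [wH]
      rw [if_pos ⟨hkm, hkn⟩]
      obtain ⟨i, rfl⟩ : ∃ i, m = k + i := ⟨m - k, by omega⟩
      obtain ⟨j, rfl⟩ : ∃ j, n = k + j := ⟨n - k, by omega⟩
      simp only [wf, wg, Nat.add_sub_cancel_left]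
      have hpar : (-1:ℝ)^(k+i+(k+j)) = (-1:ℝ)^(i+j) := by
        have hnum : k+i+(k+j) = 2*k + (i+j) := by omega
        rw [hnum, pow_add, pow_mul, neg_one_sq, one_pow, one_mul]
      rw [hpar, neg_pow v, neg_pow u]
      have h1 := fact_ne k; have h2 := fact_ne i; have h3 := fact_ne j
      field_simp
      ring
    rw [Finset.sum_congr rfl hsum, ← Finset.mul_sum, inv_fact_sum]
    ring
  calc (∑' p : ℕ × ℕ,
      (-1:ℝ)^(p.1+p.2) * v^p.1 * u^p.2 * ((p.1+p.2)! : ℝ) / ((p.1 ! :ℝ)^2 * (p.2 ! :ℝ)^2))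
      = ∑' p : ℕ × ℕ, ∑' k, wH u v (p, k) := tsum_congr fun p => (hfin p).symm
    _ = ∑' z, wH u v z := (Summable.tsum_prod hH).symm
    _ = ∑' r : ℕ × ℕ × ℕ, wf u v r.1 * (wg v r.2.1 * wg u r.2.2) := hHG
    _ = (∑' k, wf u v k) * ∑' p : ℕ × ℕ, wg v p.1 * wg u p.2 :=
        (tsum_mul_tsum_of_summable_norm hfn hghn).symm
    _ = (∑' k, wf u v k) * ((∑' i, wg v i) * (∑' j, wg u j)) := by
        rw [tsum_mul_tsum_of_summable_norm hgn hhn]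
    _ = Real.exp (-(u+v)) * ∑' k : ℕ, (u*v)^k / (k ! :ℝ)^2 := by
        rw [tsum_wg, tsum_wg, ← Real.exp_add]
        rw [show -v + -u = -(u+v) by ring]
        rw [show (∑' k, wf u v k) = ∑' k : ℕ, (u*v)^k / (k ! :ℝ)^2 from tsum_congr fun k => rfl]
        ring

lemma integral_pow_exp (a : ℝ) (ha : 0 < a) (k : ℕ) :
    ∫ x in Ioi (0:ℝ), x ^ (2*k+1) * Real.exp (-a^2 * x^2) = (k ! : ℝ) / (2 * a^(2*k+2)) := by
  have hb : (0:ℝ) < a^2 := by positivity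
  have h := integral_rpow_mul_exp_neg_mul_rpow (p := 2) (q := ((2*k+1 : ℕ) : ℝ))
    (by norm_num)
    (by
      have : (0:ℝ) ≤ ((2*k+1 : ℕ):ℝ) := Nat.cast_nonneg _
      linarith) hb
  have hLHS : ∫ x in Ioi (0:ℝ), x ^ (2*k+1) * Real.exp (-a^2 * x^2)
      = ∫ x in Ioi (0:ℝ), x ^ (((2*k+1:ℕ)):ℝ) * Real.exp (-a^2 * x ^ (2:ℝ)) := by
    refine setIntegral_congr_fun measurableSet_Ioi (fun x hx => ?_)
    rw [rpow_natCast, show (2:ℝ) = ((2:ℕ):ℝ) by norm_num, rpow_natCast]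
  rw [hLHS, h]
  have h1 : ((((2*k+1:ℕ)):ℝ) + 1)/2 = ((k:ℝ) + 1) := by push_cast; ring
  have h2 : (-(((2*k+1:ℕ):ℝ) + 1)/2) = -(((k+1 : ℕ)):ℝ) := by push_cast; ring
  rw [h1, h2, Real.Gamma_nat_eq_factorial, Real.rpow_neg hb.le, rpow_natCast]
  rw [show (a^2)^(k+1) = a^(2*k+2) from by rw [← pow_mul]; ring_nf]
  ring

noncomputable def jt (r : ℝ) (m : ℕ) : ℝ := (-1:ℝ)^m * (r/2)^(2*m) / (m ! : ℝ)^2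

lemma besselJ0_eq (r x : ℝ) : besselJ0 (r*x) = ∑' m, jt r m * x^(2*m) := by
  unfold besselJ0 jt
  refine tsum_congr fun m => ?_
  rw [show r*x/2 = r/2*x by ring, mul_pow]
  ring

lemma abs_jt_mul (r x : ℝ) (m : ℕ) :
    |jt r m * x^(2*m)| = |(r/2*x)^2|^m / (m ! : ℝ)^2 := by
  unfold jt
  rw [abs_mul, abs_div, abs_mul, abs_pow, abs_pow, abs_neg, abs_one, one_pow, one_mul,
    abs_pow, Nat.abs_cast, abs_pow, pow_mul, pow_mul, abs_pow, div_mul_eq_mul_div,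
    ← mul_pow, ← mul_pow, ← abs_mul]

lemma summable_norm_jt_mul (r x : ℝ) : Summable fun m : ℕ => ‖jt r m * x^(2*m)‖ := by
  refine Summable.of_nonneg_of_le (fun m => norm_nonneg _)
    (fun m => le_of_eq ?_) (summable_abs_div_sq ((r/2*x)^2))
  rw [Real.norm_eq_abs, abs_jt_mul]

set_option maxHeartbeats 1000000 in
/-- Weber's second exponential integral: for all real `a > 0`, `c > 0` and `q > 0`,
`∫_0^∞ x·e^{−a²x²}·J₀(c·x)·J₀(q·x) dx = (1/(2a²))·exp(−(q²+c²)/(4a²))·I₀(q·c/(2a²))`. -/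
theorem weber_second_exponential_integral (a c q : ℝ) (ha : 0 < a) (hc : 0 < c) (hq : 0 < q) :
    ∫ x in Ioi (0 : ℝ), x * Real.exp (-a ^ 2 * x ^ 2) * besselJ0 (c * x) * besselJ0 (q * x)
      = 1 / (2 * a ^ 2) * Real.exp (-(q ^ 2 + c ^ 2) / (4 * a ^ 2))
          * besselI0 (q * c / (2 * a ^ 2)) := by
  have ha2 : (0:ℝ) < a^2 := by positivity
  set u : ℝ := q^2/(4*a^2) with hu
  set v : ℝ := c^2/(4*a^2) with hv
  have hpt : ∀ x : ℝ, x * Real.exp (-a^2*x^2) * besselJ0 (c*x) * besselJ0 (q*x)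
      = ∑' p : ℕ×ℕ, (x * Real.exp (-a^2*x^2))
          * (jt c p.1 * x^(2*p.1) * (jt q p.2 * x^(2*p.2))) := by
    intro x
    rw [besselJ0_eq c x, besselJ0_eq q x]
    rw [show x * Real.exp (-a^2*x^2) * (∑' m, jt c m * x^(2*m)) * (∑' n, jt q n * x^(2*n))
        = (x * Real.exp (-a^2*x^2)) * ((∑' m, jt c m * x^(2*m)) * (∑' n, jt q n * x^(2*n)))
        from by ring]
    rw [tsum_mul_tsum_of_summable_norm (summable_norm_jt_mul c x) (summable_norm_jt_mul q x)]
    rw [← tsum_mul_left]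
  have hFeq : ∀ p : ℕ×ℕ, (fun x : ℝ => (x * Real.exp (-a^2*x^2))
        * (jt c p.1 * x^(2*p.1) * (jt q p.2 * x^(2*p.2))))
      = fun x : ℝ => (jt c p.1 * jt q p.2) * (x^(2*(p.1+p.2)+1) * Real.exp (-a^2*x^2)) := by
    rintro ⟨m,n⟩
    funext x
    simp only
    rw [show 2*(m+n)+1 = (2*m) + ((2*n)+1) by omega, pow_add, pow_add, pow_one]
    ring
  have hInt : ∀ p : ℕ×ℕ,
      IntegrableOn (fun x : ℝ => x^(2*(p.1+p.2)+1) * Real.exp (-a^2*x^2)) (Ioi 0) := by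
    intro p
    have hcast : (-1:ℝ) < ((2*(p.1+p.2)+1 : ℕ) : ℝ) := by
      have : (0:ℝ) ≤ ((2*(p.1+p.2)+1 : ℕ):ℝ) := Nat.cast_nonneg _
      linarith
    have h := integrableOn_rpow_mul_exp_neg_mul_sq ha2 hcast
    refine h.congr_fun (fun x hx => ?_) measurableSet_Ioi
    simp only [rpow_natCast]
  have hInt' : ∀ p : ℕ×ℕ, Integrable (fun x : ℝ => (x * Real.exp (-a^2*x^2))
      * (jt c p.1 * x^(2*p.1) * (jt q p.2 * x^(2*p.2)))) (volume.restrict (Ioi 0)) := by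
    intro p
    rw [hFeq p]
    exact (hInt p).const_mul _
  have hval : ∀ p : ℕ×ℕ, (∫ x in Ioi (0:ℝ), (x * Real.exp (-a^2*x^2))
        * (jt c p.1 * x^(2*p.1) * (jt q p.2 * x^(2*p.2))))
      = (jt c p.1 * jt q p.2) * (((p.1+p.2)! : ℝ) / (2*a^(2*(p.1+p.2)+2))) := by
    intro p
    rw [hFeq p, integral_const_mul, integral_pow_exp a ha (p.1+p.2)]
  have hnorm : ∀ p : ℕ×ℕ, (∫ x in Ioi (0:ℝ), ‖(x * Real.exp (-a^2*x^2))
        * (jt c p.1 * x^(2*p.1) * (jt q p.2 * x^(2*p.2)))‖)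
      = |jt c p.1 * jt q p.2| * (((p.1+p.2)! : ℝ) / (2*a^(2*(p.1+p.2)+2))) := by
    intro p
    have heq : ∀ x ∈ Ioi (0:ℝ), ‖(x * Real.exp (-a^2*x^2))
        * (jt c p.1 * x^(2*p.1) * (jt q p.2 * x^(2*p.2)))‖
        = |jt c p.1 * jt q p.2| * (x^(2*(p.1+p.2)+1) * Real.exp (-a^2*x^2)) := by
      intro x hx
      have hx0 : (0:ℝ) < x := hx
      rw [show (x * Real.exp (-a^2*x^2)) * (jt c p.1 * x^(2*p.1) * (jt q p.2 * x^(2*p.2)))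
          = (jt c p.1 * jt q p.2) * (x^(2*(p.1+p.2)+1) * Real.exp (-a^2*x^2))
          from congrFun (hFeq p) x]
      rw [Real.norm_eq_abs, abs_mul,
        abs_of_pos (show (0:ℝ) < x^(2*(p.1+p.2)+1) * Real.exp (-a^2*x^2) by positivity)]
    rw [setIntegral_congr_fun measurableSet_Ioi heq, integral_const_mul,
      integral_pow_exp a ha (p.1+p.2)]
  have hsumnorm : Summable fun p : ℕ×ℕ => ∫ x in Ioi (0:ℝ), ‖(x * Real.exp (-a^2*x^2))
      * (jt c p.1 * x^(2*p.1) * (jt q p.2 * x^(2*p.2)))‖ := by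
    refine (summable_congr fun p => hnorm p).mpr ?_
    have hsB : Summable fun p : ℕ×ℕ =>
        ((c^2/(2*a^2))^p.1/(p.1 ! : ℝ)) * ((q^2/(2*a^2))^p.2/(p.2 ! : ℝ)) := by
      refine Summable.mul_of_nonneg (Real.summable_pow_div_factorial _)
        (Real.summable_pow_div_factorial _) (fun m => by positivity) (fun n => by positivity)
    refine Summable.of_nonneg_of_le (fun p => by positivity) (fun p => ?_)
      (hsB.mul_left (1/(2*a^2)))
    obtain ⟨m,n⟩ := p
    simp only
    have habs : ∀ (r:ℝ) (k:ℕ), |jt r k| = |r/2|^(2*k)/((k ! : ℝ))^2 := by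
      intro r k
      unfold jt
      rw [abs_div, abs_mul, abs_pow, abs_neg, abs_one, one_pow, one_mul, abs_pow,
        abs_pow, Nat.abs_cast]
    have hkey : ((m+n)! : ℝ) ≤ 2^(m+n) * ((m ! : ℝ) * (n ! : ℝ)) := by
      have h1 : (m+n).choose m * m ! * n ! = (m+n)! := by
        have := Nat.choose_mul_factorial_mul_factorial (Nat.le_add_right m n)
        rwa [Nat.add_sub_cancel_left] at this
      have h2 : (m+n).choose m ≤ 2^(m+n) := by
        calc (m+n).choose m ≤ ∑ i ∈ Finset.range (m+n+1), (m+n).choose i :=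
              Finset.single_le_sum (fun i _ => Nat.zero_le _)
                (Finset.mem_range.mpr (by omega))
          _ = 2^(m+n) := Nat.sum_range_choose (m+n)
      have : ((m+n)! : ℕ) ≤ 2^(m+n) * (m ! * n !) := by
        calc (m+n)! = (m+n).choose m * m ! * n ! := h1.symm
          _ ≤ 2^(m+n) * m ! * n ! := by
              exact Nat.mul_le_mul_right _ (Nat.mul_le_mul_right _ h2)
          _ = 2^(m+n) * (m ! * n !) := by ring
      exact_mod_cast this
    rw [abs_mul, habs, habs, abs_of_pos (by positivity : (0:ℝ) < c/2),
      abs_of_pos (by positivity : (0:ℝ) < q/2)]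
    have e1 : ((c/2:ℝ))^(2*m) = (c^2/4)^m := by
      rw [pow_mul, show ((c/2:ℝ))^2 = c^2/4 by ring]
    have e2 : ((q/2:ℝ))^(2*n) = (q^2/4)^n := by
      rw [pow_mul, show ((q/2:ℝ))^2 = q^2/4 by ring]
    have e3 : (a:ℝ)^(2*(m+n)+2) = (a^2)^m * (a^2)^n * a^2 := by
      rw [pow_add, pow_mul, pow_add]
    have e5 : ((c^2/(2*a^2):ℝ))^m = (c^2/4)^m * 2^m / (a^2)^m := by
      rw [show (c^2/(2*a^2):ℝ) = (c^2/4) * 2 / a^2 by field_simp; ring, div_pow, mul_pow]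
    have e6 : ((q^2/(2*a^2):ℝ))^n = (q^2/4)^n * 2^n / (a^2)^n := by
      rw [show (q^2/(2*a^2):ℝ) = (q^2/4) * 2 / a^2 by field_simp; ring, div_pow, mul_pow]
    rw [e1, e2, e3, e5, e6]
    have hA : (0:ℝ) < (a^2)^m := by positivity
    have hB : (0:ℝ) < (a^2)^n := by positivity
    calc (c^2/4)^m / (m ! : ℝ)^2 * ((q^2/4)^n / (n ! : ℝ)^2)
          * (((m+n)! : ℝ) / (2*((a^2)^m * (a^2)^n * a^2)))
        ≤ (c^2/4)^m / (m ! : ℝ)^2 * ((q^2/4)^n / (n ! : ℝ)^2)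
          * ((2^(m+n) * ((m ! : ℝ) * (n ! : ℝ))) / (2*((a^2)^m * (a^2)^n * a^2))) := by
          gcongr
      _ = 1/(2*a^2) * ((c^2/4)^m * 2^m / (a^2)^m / (m ! : ℝ)
            * ((q^2/4)^n * 2^n / (a^2)^n / (n ! : ℝ))) := by
          rw [pow_add (2:ℝ) m n]
          have hm := fact_ne m; have hn := fact_ne n
          field_simp
  calc ∫ x in Ioi (0:ℝ), x * Real.exp (-a ^ 2 * x ^ 2) * besselJ0 (c * x) * besselJ0 (q * x)
      = ∫ x in Ioi (0:ℝ), ∑' p : ℕ×ℕ, (x * Real.exp (-a^2*x^2))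
          * (jt c p.1 * x^(2*p.1) * (jt q p.2 * x^(2*p.2))) := by
        simp only [hpt]
    _ = ∑' p : ℕ×ℕ, ∫ x in Ioi (0:ℝ), (x * Real.exp (-a^2*x^2))
          * (jt c p.1 * x^(2*p.1) * (jt q p.2 * x^(2*p.2))) :=
        (integral_tsum_of_summable_integral_norm hInt' hsumnorm).symm
    _ = ∑' p : ℕ×ℕ, (jt c p.1 * jt q p.2) * (((p.1+p.2)! : ℝ) / (2*a^(2*(p.1+p.2)+2))) :=
        tsum_congr hval
    _ = ∑' p : ℕ×ℕ, (1/(2*a^2)) * ((-1:ℝ)^(p.1+p.2) * v^p.1 * u^p.2 * ((p.1+p.2)! : ℝ)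
          / ((p.1 ! :ℝ)^2 * (p.2 ! :ℝ)^2)) := by
        refine tsum_congr fun p => ?_
        obtain ⟨m,n⟩ := p
        simp only
        unfold jt
        have e1 : ((c/2:ℝ))^(2*m) = (c^2/4)^m := by
          rw [pow_mul, show ((c/2:ℝ))^2 = c^2/4 by ring]
        have e2 : ((q/2:ℝ))^(2*n) = (q^2/4)^n := by
          rw [pow_mul, show ((q/2:ℝ))^2 = q^2/4 by ring]
        have e3 : (a:ℝ)^(2*(m+n)+2) = (a^2)^m * (a^2)^n * a^2 := by
          rw [pow_add, pow_mul, pow_add]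
        have e4 : v^m = (c^2/4)^m / (a^2)^m := by
          rw [hv, show (c^2/(4*a^2):ℝ) = (c^2/4)/(a^2) by ring, div_pow]
        have e5 : u^n = (q^2/4)^n / (a^2)^n := by
          rw [hu, show (q^2/(4*a^2):ℝ) = (q^2/4)/(a^2) by ring, div_pow]
        rw [pow_add (-1:ℝ) m n, e1, e2, e3, e4, e5]
        have hA : ((a:ℝ)^2)^m ≠ 0 := by positivity
        have hB : ((a:ℝ)^2)^n ≠ 0 := by positivity
        have hm := fact_ne m; have hn := fact_ne n
        field_simp
    _ = (1/(2*a^2)) * ∑' p : ℕ×ℕ, (-1:ℝ)^(p.1+p.2) * v^p.1 * u^p.2 * ((p.1+p.2)! : ℝ)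
          / ((p.1 ! :ℝ)^2 * (p.2 ! :ℝ)^2) := tsum_mul_left
    _ = (1/(2*a^2)) * (Real.exp (-(u+v)) * ∑' k : ℕ, (u*v)^k / (k ! :ℝ)^2) := by
        rw [core_identity]
    _ = 1 / (2 * a ^ 2) * Real.exp (-(q ^ 2 + c ^ 2) / (4 * a ^ 2))
          * besselI0 (q * c / (2 * a ^ 2)) := by
        have hexp : -(q^2+c^2)/(4*a^2) = -(u+v) := by
          rw [hu, hv]; ring
        have hI : besselI0 (q * c / (2 * a ^ 2)) = ∑' k : ℕ, (u*v)^k / (k ! :ℝ)^2 := by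
          unfold besselI0
          refine tsum_congr fun k => ?_
          rw [pow_mul, show ((q * c / (2 * a ^ 2) / 2 :ℝ))^2 = u*v from by
            rw [hu, hv]; field_simp; ring]
        rw [hexp, hI]
        ring
end

section
/- For all real a > 0, c > 0 and q > 0, ∫_0^∞ [x/(x² + c²)]·e^{−a²x²}·J₀(q·x) dx = e^{(a c)²}·K₀(q·c) − (1/2)·e^{−q²/(4a²)}·∑_{p=0}^∞ (a·c)^{2p}·Ψ_p(q²/(4a²)), where for x > 0 and integer p ≥ 0, Ψ_p(x) = (1/p!)·∫_0^∞ e^{−x t}·t^p·(1+t)^{−(p+1)} dt (the Tricomi confluent hypergeometric function Ψ(p+1, 1; x)); the series on the right converges absolutely. -/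
open MeasureTheory Real Set

/-- The modified Bessel function of the second kind of order zero, defined for
`x > 0` by `K₀(x) = ∫_0^∞ e^{−x·cosh t} dt`. -/
noncomputable def besselK0 (x : ℝ) : ℝ :=
  ∫ t in Ioi (0 : ℝ), Real.exp (-x * Real.cosh t)

/-- The Tricomi confluent hypergeometric function `Ψ(p+1, 1; x)` for `x > 0`,
given by `Ψ_p(x) = (1/p!)·∫_0^∞ e^{−x t}·t^p·(1+t)^{−(p+1)} dt`. -/
noncomputable def tricomiPsi (p : ℕ) (x : ℝ) : ℝ :=
  1 / (Nat.factorial p : ℝ) * ∫ t in Ioi (0 : ℝ), Real.exp (-x * t) * t ^ p / (1 + t) ^ (p + 1)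

lemma besselJ0_summable (y : ℝ) :
    Summable (fun m : ℕ => (-1 : ℝ) ^ m * (y / 2) ^ (2 * m) / (Nat.factorial m : ℝ) ^ 2) := by
  apply Summable.of_abs
  have h : ∀ m : ℕ, |(-1 : ℝ) ^ m * (y / 2) ^ (2 * m) / (Nat.factorial m : ℝ) ^ 2|
      = ((y/2)^2) ^ m / (Nat.factorial m : ℝ) ^ 2 := by
    intro m
    rw [abs_div, abs_mul, abs_pow, abs_neg, abs_one, one_pow, one_mul, pow_mul,
      abs_of_nonneg (by positivity : (0:ℝ) ≤ ((y/2)^2)^m),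
      abs_of_nonneg (by positivity : (0:ℝ) ≤ (Nat.factorial m : ℝ) ^ 2)]
  rw [funext h]
  apply Summable.of_nonneg_of_le (fun m => by positivity)
    (fun m => ?_) (Real.summable_pow_div_factorial ((y/2)^2))
  have h1 : (1:ℝ) ≤ (Nat.factorial m : ℝ) := by exact_mod_cast Nat.one_le_iff_ne_zero.2 (Nat.factorial_ne_zero m)
  gcongr
  all_goals first | positivity | nlinarith

lemma besselJ0_hasSum (y : ℝ) :
    HasSum (fun m : ℕ => (-1 : ℝ) ^ m * (y / 2) ^ (2 * m) / (Nat.factorial m : ℝ) ^ 2)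
      (besselJ0 y) := (besselJ0_summable y).hasSum

lemma measurable_besselJ0 : Measurable besselJ0 := by
  apply measurable_of_tendsto_metrizable
    (f := fun n => fun y => ∑ m ∈ Finset.range n,
      (-1 : ℝ) ^ m * (y / 2) ^ (2 * m) / (Nat.factorial m : ℝ) ^ 2)
  · intro n
    exact Finset.measurable_sum _ (fun m _ => by fun_prop)
  · exact tendsto_pi_nhds.2 fun y => (besselJ0_hasSum y).tendsto_sum_nat

lemma two_mul_factorial_le (m : ℕ) : ((2*m).factorial : ℝ) ≤ 4 ^ m * (m.factorial : ℝ) ^ 2 := by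
  have : (2*m).factorial ≤ 4 ^ m * m.factorial ^ 2 := by
    induction m with
    | zero => simp
    | succ n ih =>
        have h1 : 2 * (n+1) = (2*n+1) + 1 := by ring
        rw [h1, Nat.factorial_succ, Nat.factorial_succ, Nat.factorial_succ]
        calc (2*n+1+1) * ((2*n+1) * (2*n).factorial)
            ≤ (2*n+2) * ((2*n+2) * (4 ^ n * n.factorial ^ 2)) := by
              gcongr <;> omega
          _ = 4 ^ (n+1) * ((n+1) * n.factorial) ^ 2 := by ring
  exact_mod_cast this

lemma abs_besselJ0_le (y : ℝ) : |besselJ0 y| ≤ Real.cosh y := by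
  have hc := Real.hasSum_cosh y
  have hb := besselJ0_hasSum y
  calc |besselJ0 y| ≤ ∑' m : ℕ, |(-1 : ℝ) ^ m * (y / 2) ^ (2 * m) / (Nat.factorial m : ℝ) ^ 2| := by
        have := norm_tsum_le_tsum_norm (f := fun m : ℕ =>
          (-1 : ℝ) ^ m * (y / 2) ^ (2 * m) / (Nat.factorial m : ℝ) ^ 2)
          (by simpa only [Real.norm_eq_abs] using (besselJ0_summable y).abs)
        simpa only [besselJ0, Real.norm_eq_abs] using this
    _ ≤ ∑' m : ℕ, y ^ (2*m) / ((2*m).factorial : ℝ) := by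
        apply Summable.tsum_le_tsum _ (besselJ0_summable y).abs hc.summable
        intro m
        have h2 : |(-1 : ℝ) ^ m * (y / 2) ^ (2 * m) / (Nat.factorial m : ℝ) ^ 2|
            = (y^2) ^ m / (4 ^ m * (Nat.factorial m : ℝ) ^ 2) := by
          rw [abs_div, abs_mul, abs_pow, abs_neg, abs_one, one_pow, one_mul, pow_mul,
            abs_of_nonneg (by positivity : (0:ℝ) ≤ ((y/2)^2)^m),
            abs_of_nonneg (by positivity : (0:ℝ) ≤ (Nat.factorial m : ℝ) ^ 2)]
          rw [div_pow, div_pow, ← pow_mul, ← pow_mul, div_div]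
          congr 2
          rw [show (4:ℝ) = 2^2 by norm_num, ← pow_mul]
        rw [h2, pow_mul]
        apply div_le_div_of_nonneg_left (by positivity) _ (two_mul_factorial_le m)
        exact_mod_cast Nat.factorial_pos (2*m)
    _ = Real.cosh y := hc.tsum_eq

lemma abs_besselJ0_le_exp (y : ℝ) (hy : 0 ≤ y) : |besselJ0 y| ≤ Real.exp y := by
  refine (abs_besselJ0_le y).trans ?_
  rw [Real.cosh_eq]
  have := Real.exp_le_exp.2 (neg_le_self hy)
  linarith

lemma integrableOn_pow_mul_exp {b : ℝ} (hb : 0 < b) (k : ℕ) :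
    IntegrableOn (fun x : ℝ => x ^ k * Real.exp (-b * x ^ 2)) (Ioi (0:ℝ)) := by
  have h := integrableOn_rpow_mul_exp_neg_mul_sq hb (s := (k:ℝ)) (lt_of_lt_of_le (by norm_num) (Nat.cast_nonneg k))
  apply h.congr_fun _ measurableSet_Ioi
  intro x hx
  simp [Real.rpow_natCast]

lemma integral_exp_neg_mul {k : ℝ} (hk : 0 < k) :
    ∫ s in Ioi (0:ℝ), Real.exp (-(k * s)) = 1 / k := by
  have := integral_comp_mul_left_Ioi (fun s => Real.exp (-s)) 0 hk
  simp only [mul_zero, smul_eq_mul] at this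
  rw [this, integral_exp_neg_Ioi]
  simp [one_div]

lemma integral_pow_mul_exp {b : ℝ} (hb : 0 < b) (m : ℕ) :
    ∫ x in Ioi (0:ℝ), x ^ (2*m+1) * Real.exp (-b * x ^ 2)
      = (Nat.factorial m : ℝ) / (2 * b ^ (m+1)) := by
  have key := integral_comp_rpow_Ioi_of_pos
    (g := fun u : ℝ => u ^ m * Real.exp (-b * u)) (p := 2) (by norm_num)
  have h1 : ∀ x ∈ Ioi (0:ℝ), ((2:ℝ) * x ^ ((2:ℝ) - 1)) • ((x ^ (2:ℝ)) ^ m * Real.exp (-b * x ^ (2:ℝ)))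
      = 2 * (x ^ (2*m+1) * Real.exp (-b * x ^ 2)) := by
    intro x hx
    have hx' : (0:ℝ) ≤ x := (mem_Ioi.1 hx).le
    rw [show ((2:ℝ) - 1) = 1 by norm_num, Real.rpow_one,
      show (x:ℝ) ^ (2:ℝ) = x ^ (2:ℕ) by rw [← Real.rpow_natCast x 2]; norm_num]
    rw [smul_eq_mul, ← pow_mul]
    ring
  rw [setIntegral_congr_fun measurableSet_Ioi h1] at key
  have h2 : ∫ u in Ioi (0:ℝ), u ^ m * Real.exp (-b * u) = (Nat.factorial m : ℝ) / b ^ (m+1) := by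
    have := Real.integral_rpow_mul_exp_neg_mul_Ioi (a := (m:ℝ)+1) (r := b) (by positivity) hb
    have h3 : ∀ u ∈ Ioi (0:ℝ), u ^ ((m:ℝ)+1-1) * Real.exp (-(b*u)) = u ^ m * Real.exp (-b*u) := by
      intro u hu
      rw [add_sub_cancel_right, Real.rpow_natCast, neg_mul]
    rw [setIntegral_congr_fun measurableSet_Ioi h3] at this
    rw [this]
    rw [show ((m:ℝ)+1) = ((m+1 : ℕ):ℝ) by push_cast; ring]
    rw [Real.rpow_natCast]
    rw [show ((m+1 : ℕ):ℝ) = (m:ℝ)+1 by push_cast; ring, Real.Gamma_nat_eq_factorial]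
    rw [div_pow, one_pow]
    ring
  rw [h2, integral_const_mul] at key
  have hb' : (0:ℝ) < b ^ (m+1) := by positivity
  field_simp at key ⊢
  linarith

lemma abs_coeff (q : ℝ) (m : ℕ) :
    |(-1:ℝ)^m * (q/2)^(2*m) / (Nat.factorial m : ℝ)^2|
      = (q^2)^m / (4^m * (Nat.factorial m : ℝ)^2) := by
  rw [abs_div, abs_mul, abs_pow, abs_neg, abs_one, one_pow, one_mul, pow_mul,
    abs_of_nonneg (by positivity : (0:ℝ) ≤ ((q/2)^2)^m),
    abs_of_nonneg (by positivity : (0:ℝ) ≤ (Nat.factorial m : ℝ) ^ 2)]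
  rw [div_pow, div_pow, ← pow_mul, ← pow_mul, div_div]
  congr 2
  rw [show (4:ℝ) = 2^2 by norm_num, ← pow_mul]

lemma hankel {b : ℝ} (hb : 0 < b) (q : ℝ) :
    ∫ x in Ioi (0:ℝ), x * Real.exp (-b * x ^ 2) * besselJ0 (q * x)
      = Real.exp (-q^2/(4*b)) / (2*b) := by
  have hfac : ∀ m : ℕ, ((Nat.factorial m : ℝ)) ≠ 0 :=
    fun m => Nat.cast_ne_zero.2 (Nat.factorial_ne_zero m)
  set c : ℕ → ℝ := fun m => (-1:ℝ)^m * (q/2)^(2*m) / (Nat.factorial m : ℝ)^2 with hc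
  set F : ℕ → ℝ → ℝ := fun m x => x * Real.exp (-b * x^2) *
    ((-1:ℝ)^m * (q*x/2)^(2*m) / (Nat.factorial m:ℝ)^2) with hF
  have hFc : ∀ m x, F m x = c m * (x^(2*m+1) * Real.exp (-b * x^2)) := by
    intro m x
    simp only [hF, hc]
    rw [show q*x/2 = (q/2)*x by ring, mul_pow, pow_mul, pow_mul, ← pow_mul x, pow_succ']
    ring
  have hInt : ∀ m : ℕ, Integrable (F m) (volume.restrict (Ioi (0:ℝ))) := by
    intro m
    simp only [funext (hFc m)]
    exact ((integrableOn_pow_mul_exp hb (2*m+1)).const_mul (c m))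
  have hIval : ∀ m : ℕ, ∫ x in Ioi (0:ℝ), F m x
      = c m * ((Nat.factorial m : ℝ) / (2 * b^(m+1))) := by
    intro m
    simp only [funext (hFc m)]
    rw [integral_const_mul, integral_pow_mul_exp hb m]
  have hNval : ∀ m : ℕ, ∫ x in Ioi (0:ℝ), ‖F m x‖
      = |c m| * ((Nat.factorial m : ℝ) / (2 * b^(m+1))) := by
    intro m
    have : ∀ x ∈ Ioi (0:ℝ), ‖F m x‖ = |c m| * (x^(2*m+1) * Real.exp (-b * x^2)) := by
      intro x hx
      have hx' : (0:ℝ) < x := hx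
      rw [hFc m x, Real.norm_eq_abs, abs_mul, abs_of_nonneg (by positivity : (0:ℝ) ≤ x^(2*m+1) * Real.exp (-b*x^2))]
    rw [setIntegral_congr_fun measurableSet_Ioi this, integral_const_mul,
      integral_pow_mul_exp hb m]
  have hSum : Summable (fun m : ℕ => ∫ x in Ioi (0:ℝ), ‖F m x‖) := by
    apply Summable.congr (f := fun m : ℕ => 1/(2*b) * ((q^2/(4*b))^m / (Nat.factorial m : ℝ)))
    · exact (Real.summable_pow_div_factorial (q^2/(4*b))).mul_left _
    · intro m
      rw [hNval m, abs_coeff q m, div_pow, mul_pow]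
      field_simp
      ring
  have hswap := MeasureTheory.integral_tsum_of_summable_integral_norm hInt hSum
  have hpt : ∀ x : ℝ, (∑' m, F m x) = x * Real.exp (-b * x^2) * besselJ0 (q*x) := by
    intro x
    rw [besselJ0, ← tsum_mul_left]
  calc ∫ x in Ioi (0:ℝ), x * Real.exp (-b * x ^ 2) * besselJ0 (q * x)
      = ∫ x in Ioi (0:ℝ), ∑' m, F m x := by
        exact integral_congr_ae (Filter.Eventually.of_forall fun x => (hpt x).symm)
    _ = ∑' m, ∫ x in Ioi (0:ℝ), F m x := hswap.symm
    _ = ∑' m, 1/(2*b) * ((-(q^2/(4*b)))^m / (Nat.factorial m : ℝ)) := by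
        congr 1
        funext m
        rw [hIval m, hc]
        simp only
        rw [pow_mul, show ((q/2)^2) = q^2/4 by ring, div_pow,
          neg_pow (q^2/(4*b)), div_pow (q^2) (4*b), mul_pow]
        field_simp
        ring
    _ = Real.exp (-q^2/(4*b)) / (2*b) := by
        rw [tsum_mul_left]
        have := (NormedSpace.expSeries_div_hasSum_exp (-(q^2/(4*b)))).tsum_eq
        rw [this, ← Real.exp_eq_exp_ℝ]
        rw [neg_div]
        ring

lemma integrableOn_G {α β : ℝ} (hα : 0 < α) (hβ : 0 < β) :
    IntegrableOn (fun u : ℝ => Real.exp (-(α*u) - β/u) / u) (Ioi (0:ℝ)) := by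
  apply Integrable.mono' (g := fun u => (1/β) * Real.exp (-α * u))
  · exact (exp_neg_integrableOn_Ioi 0 hα).const_mul _
  · apply Measurable.aestronglyMeasurable
    fun_prop
  · rw [ae_restrict_iff' measurableSet_Ioi]
    filter_upwards with u hu
    have hu' : (0:ℝ) < u := hu
    rw [Real.norm_eq_abs, abs_of_nonneg (by positivity)]
    have h1 : Real.exp (-(β/u)) ≤ u/β := by
      have h2 : β/u ≤ Real.exp (β/u) := by linarith [Real.add_one_le_exp (β/u)]
      calc Real.exp (-(β/u)) = (Real.exp (β/u))⁻¹ := Real.exp_neg _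
        _ ≤ (β/u)⁻¹ := by
            apply inv_anti₀ (by positivity) h2
        _ = u/β := by rw [inv_div]
    have h3 : Real.exp (-(α*u) - β/u) = Real.exp (-(α*u)) * Real.exp (-(β/u)) := by
      rw [← Real.exp_add]; ring_nf
    rw [h3, div_le_iff₀ hu', neg_mul]
    calc Real.exp (-(α*u)) * Real.exp (-(β/u)) ≤ Real.exp (-(α*u)) * (u/β) :=
          mul_le_mul_of_nonneg_left h1 (Real.exp_pos _).le
      _ = 1/β * Real.exp (-(α*u)) * u := by ring

lemma besselK0_rep {z : ℝ} (hz : 0 < z) :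
    besselK0 z = 1/2 * ∫ u in Ioi (0:ℝ), Real.exp (-u - z^2/(4*u)) / u := by
  set g : ℝ → ℝ := fun u => Real.exp (-u - z^2/(4*u)) / u with hg
  have hgval : ∀ t : ℝ, ((z/2) * Real.exp t) * g ((z/2) * Real.exp t)
      = Real.exp (-z * Real.cosh t) := by
    intro t
    have hE := Real.exp_pos t
    have h0 : (0:ℝ) < (z/2) * Real.exp t := by positivity
    rw [hg]
    simp only
    rw [mul_comm ((z/2) * Real.exp t), div_mul_cancel₀ _ h0.ne']
    congr 1
    rw [Real.cosh_eq, Real.exp_neg]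
    field_simp
    ring
  have hgval2 : ∀ t : ℝ, ((z/2) * Real.exp (-t)) * g ((z/2) * Real.exp (-t))
      = Real.exp (-z * Real.cosh t) := by
    intro t
    have := hgval (-t)
    rwa [Real.cosh_neg] at this
  -- first substitution : image of Ioi 0 under t ↦ (z/2) e^t
  have him1 : (fun t : ℝ => (z/2) * Real.exp t) '' (Ioi 0) = Ioi (z/2) := by
    ext u
    constructor
    · rintro ⟨t, ht, rfl⟩
      have h1 : (1:ℝ) < Real.exp t := Real.one_lt_exp_iff.2 ht
      have : z/2 * 1 < z/2 * Real.exp t := by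
        apply mul_lt_mul_of_pos_left h1 (by positivity)
      simpa using this
    · intro hu
      have hu' : z/2 < u := hu
      have hz2 : (0:ℝ) < z/2 := by positivity
      refine ⟨Real.log (u / (z/2)), ?_, ?_⟩
      · apply Real.log_pos
        rw [lt_div_iff₀ hz2]; linarith
      · show z/2 * Real.exp (Real.log (u / (z/2))) = u
        rw [Real.exp_log (div_pos (by linarith) hz2)]
        field_simp
  have him2 : (fun t : ℝ => (z/2) * Real.exp (-t)) '' (Ioi 0) = Ioo 0 (z/2) := by
    ext u
    constructor
    · rintro ⟨t, ht, rfl⟩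
      have h1 : Real.exp (-t) < 1 := Real.exp_lt_one_iff.2 (by simpa using ht)
      constructor
      · positivity
      · have : z/2 * Real.exp (-t) < z/2 * 1 := by
          apply mul_lt_mul_of_pos_left h1 (by positivity)
        simpa using this
    · rintro ⟨hu0, hu2⟩
      have hz2 : (0:ℝ) < z/2 := by positivity
      refine ⟨Real.log ((z/2) / u), ?_, ?_⟩
      · apply Real.log_pos
        rw [lt_div_iff₀ hu0]; linarith
      · show z/2 * Real.exp (-Real.log ((z/2) / u)) = u
        rw [← Real.log_inv, Real.exp_log (by positivity : (0:ℝ) < ((z/2)/u)⁻¹)]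
        field_simp
  have hsub1 : ∫ u in Ioi (z/2), g u = besselK0 z := by
    rw [← him1, integral_image_eq_integral_abs_deriv_smul measurableSet_Ioi
      (f' := fun t => (z/2) * Real.exp t)
      (fun t _ => ((Real.hasDerivAt_exp t).const_mul (z/2)).hasDerivWithinAt)
      (fun s _ t _ h => by
        have := mul_left_cancel₀ (by positivity : (z/2 : ℝ) ≠ 0) h
        exact Real.exp_injective this) g]
    rw [besselK0]
    refine setIntegral_congr_fun measurableSet_Ioi (fun t _ => ?_)
    rw [smul_eq_mul, abs_of_pos (by positivity), hgval t]
  have hsub2 : ∫ u in Ioo (0:ℝ) (z/2), g u = besselK0 z := by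
    have hder : ∀ t ∈ Ioi (0:ℝ), HasDerivWithinAt (fun t : ℝ => (z/2) * Real.exp (-t))
        (-((z/2) * Real.exp (-t))) (Ioi 0) t := by
      intro t _
      have h1 : HasDerivAt (fun t : ℝ => Real.exp (-t)) (-Real.exp (-t)) t := by
        simpa [Function.comp_def] using (Real.hasDerivAt_exp (-t)).comp t (hasDerivAt_neg t)
      simpa [mul_comm] using (h1.const_mul (z/2)).hasDerivWithinAt
    rw [← him2, integral_image_eq_integral_abs_deriv_smul measurableSet_Ioi hder
      (fun s _ t _ h => by
        have := mul_left_cancel₀ (by positivity : (z/2 : ℝ) ≠ 0) h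
        exact neg_injective (Real.exp_injective this)) g]
    rw [besselK0]
    refine setIntegral_congr_fun measurableSet_Ioi (fun t _ => ?_)
    rw [smul_eq_mul, abs_neg, abs_of_pos (by positivity), hgval2 t]
  have hint : IntegrableOn g (Ioi (0:ℝ)) := by
    apply (integrableOn_G one_pos (by positivity : (0:ℝ) < z^2/4)).congr_fun _ measurableSet_Ioi
    intro u hu
    rw [hg]
    simp only
    rw [one_mul, div_div]
  have hsplit : ∫ u in Ioi (0:ℝ), g u
      = (∫ u in Ioo (0:ℝ) (z/2), g u) + ∫ u in Ici (z/2), g u := by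
    rw [← setIntegral_union]
    · rw [Ioo_union_Ici_eq_Ioi (by positivity : (0:ℝ) < z/2)]
    · exact Set.disjoint_left.2 fun x hx hx' => absurd hx.2 (not_lt.2 hx')
    · exact measurableSet_Ici
    · exact hint.mono_set (fun x hx => hx.1)
    · exact hint.mono_set (fun x hx => lt_of_lt_of_le (by positivity : (0:ℝ) < z/2) hx)
  rw [hsplit, MeasureTheory.integral_Ici_eq_integral_Ioi, hsub1, hsub2]
  ring

lemma besselK0_qc {c q : ℝ} (hc : 0 < c) (hq : 0 < q) :
    besselK0 (q*c) = 1/2 * ∫ v in Ioi (0:ℝ), Real.exp (-(c^2*v) - q^2/(4*v)) / v := by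
  rw [besselK0_rep (by positivity : (0:ℝ) < q*c)]
  congr 1
  set g : ℝ → ℝ := fun u => Real.exp (-u - (q*c)^2/(4*u)) / u with hg
  have h := integral_comp_mul_left_Ioi g 0 (by positivity : (0:ℝ) < c^2)
  simp only [mul_zero, smul_eq_mul] at h
  have heq : ∀ v ∈ Ioi (0:ℝ), Real.exp (-(c^2*v) - q^2/(4*v)) / v = c^2 * g (c^2 * v) := by
    intro v hv
    have hv' : (0:ℝ) < v := hv
    rw [hg]; simp only
    rw [show (q*c)^2/(4*(c^2*v)) = q^2/(4*v) by field_simp]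
    field_simp
  have : ∫ v in Ioi (0:ℝ), Real.exp (-(c^2*v) - q^2/(4*v)) / v
      = ∫ u in Ioi (0:ℝ), g u := by
    rw [setIntegral_congr_fun measurableSet_Ioi heq, integral_const_mul, h]
    field_simp
  rw [this]

lemma integral_Ioi_comp_add (h : ℝ → ℝ) (d : ℝ) :
    ∫ s in Ioi (0:ℝ), h (d + s) = ∫ u in Ioi d, h u := by
  rw [← integral_indicator measurableSet_Ioi, ← integral_indicator measurableSet_Ioi]
  rw [← integral_add_right_eq_self (f := (Ioi d).indicator h) d]
  congr 1
  funext s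
  by_cases hs : s ∈ Ioi (0:ℝ)
  · rw [indicator_of_mem hs, indicator_of_mem (by simpa using by linarith [mem_Ioi.1 hs] : s + d ∈ Ioi d)]
    rw [add_comm]
  · rw [indicator_of_notMem hs, indicator_of_notMem]
    simp only [mem_Ioi, not_lt] at hs ⊢
    linarith

lemma psi_integrand_integrableOn {x : ℝ} (hx : 0 < x) (p : ℕ) :
    IntegrableOn (fun t : ℝ => Real.exp (-x*t) * t^p / (1+t)^(p+1)) (Ioi (0:ℝ)) := by
  apply Integrable.mono' (g := fun t => Real.exp (-x * t))
  · exact exp_neg_integrableOn_Ioi 0 hx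
  · apply Measurable.aestronglyMeasurable; fun_prop
  · rw [ae_restrict_iff' measurableSet_Ioi]
    filter_upwards with t ht
    have ht' : (0:ℝ) < t := ht
    rw [Real.norm_eq_abs, abs_of_nonneg (by positivity)]
    rw [div_le_iff₀ (by positivity)]
    have h1 : t^p ≤ (1+t)^(p+1) := by
      calc t^p ≤ (1+t)^p := by gcongr; linarith
        _ ≤ (1+t)^(p+1) := by
            apply pow_le_pow_right₀ (by linarith) (by omega)
    nlinarith [Real.exp_pos (-x*t), mul_le_mul_of_nonneg_left h1 (Real.exp_pos (-x*t)).le]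

lemma psi_integral_nonneg {x : ℝ} (p : ℕ) :
    0 ≤ ∫ t in Ioi (0:ℝ), Real.exp (-x*t) * t^p / (1+t)^(p+1) := by
  apply setIntegral_nonneg measurableSet_Ioi
  intro t ht
  have ht' : (0:ℝ) < t := ht
  positivity

lemma psi_integral_le {x : ℝ} (hx : 0 < x) (p : ℕ) :
    ∫ t in Ioi (0:ℝ), Real.exp (-x*t) * t^p / (1+t)^(p+1) ≤ 1/x := by
  rw [← integral_exp_neg_mul hx]
  apply setIntegral_mono_on (psi_integrand_integrableOn hx p) _ measurableSet_Ioi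
  · intro t ht
    have ht' : (0:ℝ) < t := ht
    rw [div_le_iff₀ (by positivity), neg_mul]
    have h1 : t^p ≤ (1+t)^(p+1) := by
      calc t^p ≤ (1+t)^p := by gcongr; linarith
        _ ≤ (1+t)^(p+1) := pow_le_pow_right₀ (by linarith) (by omega)
    nlinarith [mul_le_mul_of_nonneg_left h1 (Real.exp_pos (-(x*t))).le]
  · apply (exp_neg_integrableOn_Ioi 0 hx).congr_fun _ measurableSet_Ioi
    intro t _; simp [neg_mul]

lemma tricomiPsi_nonneg {x : ℝ} (p : ℕ) : 0 ≤ tricomiPsi p x := by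
  rw [tricomiPsi]
  have := psi_integral_nonneg (x := x) (p := p)
  positivity

lemma tricomiPsi_le {x : ℝ} (hx : 0 < x) (p : ℕ) :
    tricomiPsi p x ≤ 1/(Nat.factorial p : ℝ) * (1/x) := by
  rw [tricomiPsi]
  apply mul_le_mul_of_nonneg_left (psi_integral_le hx p) (by positivity)

lemma summable_main {A x : ℝ} (hx : 0 < x) :
    Summable (fun p : ℕ => |A^(2*p) * tricomiPsi p x|) := by
  apply Summable.of_nonneg_of_le (fun p => abs_nonneg _)
    (fun p => ?_) ((Real.summable_pow_div_factorial (A^2)).mul_right (1/x))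
  rw [abs_mul, abs_of_nonneg (tricomiPsi_nonneg p), pow_mul, abs_pow, abs_of_nonneg (sq_nonneg A)]
  calc (A^2)^p * tricomiPsi p x
      ≤ (A^2)^p * (1/(Nat.factorial p : ℝ) * (1/x)) := by
        apply mul_le_mul_of_nonneg_left (tricomiPsi_le hx p) (by positivity)
    _ = (A^2)^p / (Nat.factorial p : ℝ) * (1/x) := by ring

lemma tail_eq {a c q : ℝ} (ha : 0 < a) (hc : 0 < c) (hq : 0 < q) :
    Real.exp (a^2*c^2) * ∫ u in Ioc (0:ℝ) (a^2), Real.exp (-(c^2*u) - q^2/(4*u)) / u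
      = Real.exp (-(q^2/(4*a^2)))
          * ∑' p : ℕ, (a*c)^(2*p) * tricomiPsi p (q^2/(4*a^2)) := by
  set x₀ : ℝ := q^2/(4*a^2) with hx₀
  have hx₀pos : 0 < x₀ := by positivity
  set G : ℝ → ℝ := fun u => Real.exp (-(c^2*u) - q^2/(4*u)) / u with hG
  set F : ℕ → ℝ → ℝ := fun p t =>
    ((a*c)^(2*p) / (Nat.factorial p : ℝ)) * (Real.exp (-x₀*t) * t^p / (1+t)^(p+1)) with hFdef
  -- substitution u = a^2/(1+t)
  have him : (fun t : ℝ => a^2/(1+t)) '' (Ioi 0) = Ioo 0 (a^2) := by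
    ext u
    constructor
    · rintro ⟨t, ht, rfl⟩
      have ht' : (0:ℝ) < t := ht
      constructor
      · positivity
      · rw [div_lt_iff₀ (by linarith)]
        nlinarith [mul_pos (pow_pos ha 2) ht']
    · rintro ⟨hu0, hu2⟩
      refine ⟨a^2/u - 1, ?_, ?_⟩
      · simp only [mem_Ioi, sub_pos]
        rw [lt_div_iff₀ hu0]; linarith
      · show a^2/(1 + (a^2/u - 1)) = u
        field_simp
        ring
  have hder : ∀ t ∈ Ioi (0:ℝ), HasDerivWithinAt (fun t : ℝ => a^2/(1+t))
      (-(a^2/(1+t)^2)) (Ioi 0) t := by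
    intro t ht
    have ht' : (0:ℝ) < t := ht
    have h1 : HasDerivAt (fun t : ℝ => 1+t) 1 t := by
      simpa using (hasDerivAt_id t).const_add 1
    have h2 := (h1.inv (by linarith : (1:ℝ)+t ≠ 0)).const_mul (a^2)
    have : a^2 * (-1/(1+t)^2) = -(a^2/(1+t)^2) := by ring
    rw [this] at h2
    exact h2.hasDerivWithinAt
  have hinj : InjOn (fun t : ℝ => a^2/(1+t)) (Ioi 0) := by
    intro s hs t ht h
    have hs' : (0:ℝ) < s := hs
    have ht' : (0:ℝ) < t := ht
    simp only at h
    field_simp at h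
    linarith
  have hsub : ∫ u in Ioc (0:ℝ) (a^2), G u
      = ∫ t in Ioi (0:ℝ), |(-(a^2/(1+t)^2))| • G (a^2/(1+t)) := by
    rw [MeasureTheory.integral_Ioc_eq_integral_Ioo, ← him,
      integral_image_eq_integral_abs_deriv_smul measurableSet_Ioi hder hinj G]
  -- pointwise identity
  have hpt : ∀ t ∈ Ioi (0:ℝ),
      Real.exp (a^2*c^2) * (|(-(a^2/(1+t)^2))| • G (a^2/(1+t)))
        = Real.exp (-x₀) * ∑' p, F p t := by
    intro t ht
    have ht' : (0:ℝ) < t := ht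
    have h1t : (0:ℝ) < 1 + t := by linarith
    have hexp := NormedSpace.expSeries_div_hasSum_exp (a^2*c^2*t/(1+t))
    have hsum : ∑' p, F p t
        = Real.exp (a^2*c^2*t/(1+t)) * (Real.exp (-x₀*t)/(1+t)) := by
      rw [← Real.exp_eq_exp_ℝ] at hexp
      rw [← (hexp.mul_right (Real.exp (-x₀*t)/(1+t))).tsum_eq]
      congr 1
      funext p
      rw [hFdef]
      simp only
      rw [show (a*c)^(2*p) = (a^2*c^2)^p by rw [pow_mul]; congr 1; ring,
        div_pow, mul_pow, pow_succ]
      field_simp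
      ring
    rw [hsum, smul_eq_mul, abs_neg, abs_of_pos (by positivity), hG]
    simp only
    rw [show a^2*c^2*t/(1+t) = a^2*c^2 - a^2*c^2/(1+t) by field_simp; ring]
    have e1 : c^2*(a^2/(1+t)) = a^2*c^2/(1+t) := by ring
    have e2 : q^2/(4*(a^2/(1+t))) = x₀*(1+t) := by
      rw [hx₀]; field_simp; try ring
    rw [e1, e2]
    rw [show Real.exp (-(a^2*c^2/(1+t)) - x₀*(1+t))
          = Real.exp (-(a^2*c^2/(1+t))) * (Real.exp (-x₀) * Real.exp (-x₀*t)) by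
        rw [← Real.exp_add, ← Real.exp_add]; congr 1; try ring,
      show Real.exp (a^2*c^2 - a^2*c^2/(1+t))
          = Real.exp (a^2*c^2) * Real.exp (-(a^2*c^2/(1+t))) by
        rw [← Real.exp_add]; congr 1; try ring]
    field_simp
  -- exchange sum and integral
  have hFint : ∀ p : ℕ, Integrable (F p) (volume.restrict (Ioi (0:ℝ))) := by
    intro p
    exact (psi_integrand_integrableOn hx₀pos p).const_mul _
  have hFnorm : ∀ p : ℕ, ∫ t in Ioi (0:ℝ), ‖F p t‖
      = ((a*c)^(2*p) / (Nat.factorial p : ℝ))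
          * ∫ t in Ioi (0:ℝ), Real.exp (-x₀*t) * t^p / (1+t)^(p+1) := by
    intro p
    rw [← integral_const_mul]
    refine setIntegral_congr_fun measurableSet_Ioi (fun t ht => ?_)
    have ht' : (0:ℝ) < t := ht
    rw [hFdef, Real.norm_eq_abs]
    simp only
    rw [abs_mul, abs_of_nonneg (by positivity : (0:ℝ) ≤ (a*c)^(2*p) / (Nat.factorial p : ℝ)),
      abs_of_nonneg (by positivity)]
  have hFsum : Summable (fun p : ℕ => ∫ t in Ioi (0:ℝ), ‖F p t‖) := by
    apply Summable.of_nonneg_of_le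
      (fun p => by
        rw [hFnorm p]
        have := psi_integral_nonneg (x := x₀) (p := p)
        positivity)
      (fun p => ?_)
      ((Real.summable_pow_div_factorial ((a*c)^2)).mul_right (1/x₀))
    rw [hFnorm p]
    calc ((a*c)^(2*p) / (Nat.factorial p : ℝ))
          * ∫ t in Ioi (0:ℝ), Real.exp (-x₀*t) * t^p / (1+t)^(p+1)
        ≤ ((a*c)^(2*p) / (Nat.factorial p : ℝ)) * (1/x₀) := by
          apply mul_le_mul_of_nonneg_left (psi_integral_le hx₀pos p) (by positivity)
      _ = ((a*c)^2)^p / (Nat.factorial p : ℝ) * (1/x₀) := by rw [pow_mul]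
  have hswap := MeasureTheory.integral_tsum_of_summable_integral_norm hFint hFsum
  calc Real.exp (a^2*c^2) * ∫ u in Ioc (0:ℝ) (a^2), G u
      = ∫ t in Ioi (0:ℝ), Real.exp (a^2*c^2) * (|(-(a^2/(1+t)^2))| • G (a^2/(1+t))) := by
        rw [hsub, integral_const_mul]
    _ = ∫ t in Ioi (0:ℝ), Real.exp (-x₀) * ∑' p, F p t := by
        exact setIntegral_congr_fun measurableSet_Ioi hpt
    _ = Real.exp (-x₀) * ∑' p, ∫ t in Ioi (0:ℝ), F p t := by
        rw [integral_const_mul, ← hswap]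
    _ = Real.exp (-x₀) * ∑' p : ℕ, (a*c)^(2*p) * tricomiPsi p x₀ := by
        refine congrArg _ (tsum_congr fun p => ?_)
        rw [hFdef]
        simp only
        rw [integral_const_mul, tricomiPsi]
        ring

lemma fubini_step {a c q : ℝ} (ha : 0 < a) (hc : 0 < c) (hq : 0 < q) :
    ∫ x in Ioi (0:ℝ), x / (x^2 + c^2) * Real.exp (-a^2 * x^2) * besselJ0 (q*x)
      = ∫ s in Ioi (0:ℝ),
          Real.exp (-(c^2*s)) * (Real.exp (-q^2/(4*(a^2+s))) / (2*(a^2+s))) := by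
  set μ : Measure (ℝ × ℝ) := (volume.restrict (Ioi (0:ℝ))).prod (volume.restrict (Ioi (0:ℝ)))
    with hμ
  set f : ℝ → ℝ → ℝ := fun x s =>
    (x * Real.exp (-a^2 * x^2) * besselJ0 (q*x)) * Real.exp (-((c^2 + x^2)*s)) with hf
  have hmeas : AEStronglyMeasurable (Function.uncurry f) μ := by
    apply Measurable.aestronglyMeasurable
    have h1 : Measurable fun p : ℝ×ℝ => p.1 * Real.exp (-a^2 * p.1^2) := by fun_prop
    have h2 : Measurable fun p : ℝ×ℝ => besselJ0 (q * p.1) :=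
      measurable_besselJ0.comp (by fun_prop)
    have h3 : Measurable fun p : ℝ×ℝ => Real.exp (-((c^2 + p.1^2) * p.2)) := by fun_prop
    exact (h1.mul h2).mul h3
  have hsec : ∀ x : ℝ, 0 < x → Integrable (f x) (volume.restrict (Ioi (0:ℝ))) := by
    intro x hx
    exact ((exp_neg_integrableOn_Ioi 0 (by positivity : (0:ℝ) < c^2 + x^2)).congr_fun
      (fun s _ => by rw [neg_mul]) measurableSet_Ioi).const_mul _
  have hJb : ∀ x : ℝ, 0 < x → |besselJ0 (q*x)| ≤ Real.exp (q*x) :=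
    fun x hx => abs_besselJ0_le_exp (q*x) (by positivity)
  have hnormint : ∀ x : ℝ, 0 < x → ∫ s in Ioi (0:ℝ), ‖f x s‖
      = |x * Real.exp (-a^2 * x^2) * besselJ0 (q*x)| * (1/(c^2 + x^2)) := by
    intro x hx
    have : ∀ s ∈ Ioi (0:ℝ), ‖f x s‖
        = |x * Real.exp (-a^2 * x^2) * besselJ0 (q*x)| * Real.exp (-((c^2 + x^2)*s)) := by
      intro s _
      rw [hf, Real.norm_eq_abs, abs_mul, abs_of_pos (Real.exp_pos _)]
    rw [setIntegral_congr_fun measurableSet_Ioi this, integral_const_mul,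
      integral_exp_neg_mul (by positivity : (0:ℝ) < c^2 + x^2)]
  have hbound : ∀ x : ℝ, 0 < x →
      |x * Real.exp (-a^2 * x^2) * besselJ0 (q*x)| * (1/(c^2 + x^2))
        ≤ (Real.exp (q^2/(2*a^2)) / c^2) * (x * Real.exp (-(a^2/2) * x^2)) := by
    intro x hx
    have h1 : |x * Real.exp (-a^2 * x^2) * besselJ0 (q*x)|
        ≤ x * Real.exp (-a^2 * x^2) * Real.exp (q*x) := by
      rw [abs_mul, abs_of_pos (by positivity : (0:ℝ) < x * Real.exp (-a^2*x^2) )]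
      exact mul_le_mul_of_nonneg_left (hJb x hx) (by positivity)
    have h2 : Real.exp (-a^2 * x^2) * Real.exp (q*x)
        ≤ Real.exp (q^2/(2*a^2)) * Real.exp (-(a^2/2) * x^2) := by
      rw [← Real.exp_add, ← Real.exp_add]
      apply Real.exp_le_exp.2
      have e : q^2/(2*a^2) * (2*a^2) = q^2 :=
        div_mul_cancel₀ _ (by positivity : (2*a^2 : ℝ) ≠ 0)
      nlinarith [sq_nonneg (a^2*x - q), mul_pos two_pos (pow_pos ha 2)]
    have h3 : (1:ℝ)/(c^2 + x^2) ≤ 1/c^2 := by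
      apply one_div_le_one_div_of_le (by positivity)
      nlinarith
    calc |x * Real.exp (-a^2 * x^2) * besselJ0 (q*x)| * (1/(c^2 + x^2))
        ≤ (x * Real.exp (-a^2 * x^2) * Real.exp (q*x)) * (1/c^2) := by
          apply mul_le_mul h1 h3 (by positivity) (by positivity)
      _ ≤ (x * (Real.exp (q^2/(2*a^2)) * Real.exp (-(a^2/2) * x^2))) * (1/c^2) := by
          have := mul_le_mul_of_nonneg_left h2 hx.le
          apply mul_le_mul_of_nonneg_right _ (by positivity)
          calc x * Real.exp (-a^2*x^2) * Real.exp (q*x)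
              = x * (Real.exp (-a^2*x^2) * Real.exp (q*x)) := by ring
            _ ≤ _ := this
      _ = (Real.exp (q^2/(2*a^2)) / c^2) * (x * Real.exp (-(a^2/2) * x^2)) := by ring
  have hintF : Integrable (Function.uncurry f) μ := by
    rw [hμ]
    refine (integrable_prod_iff hmeas).2 ⟨?_, ?_⟩
    · rw [ae_restrict_iff' measurableSet_Ioi]
      filter_upwards with x hx
      exact hsec x hx
    · apply Integrable.mono'
        (g := fun x => (Real.exp (q^2/(2*a^2)) / c^2) * (x * Real.exp (-(a^2/2) * x^2)))
      · apply Integrable.const_mul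
        exact ((integrableOn_pow_mul_exp (by positivity : (0:ℝ) < a^2/2) 1).congr_fun
          (fun x _ => by simp) measurableSet_Ioi)
      · exact hmeas.norm.integral_prod_right'
      · rw [ae_restrict_iff' measurableSet_Ioi]
        filter_upwards with x hx
        rw [Real.norm_eq_abs, abs_of_nonneg (by
          apply integral_nonneg; intro s; exact norm_nonneg _)]
        have e0 : (∫ y in Ioi (0:ℝ), ‖Function.uncurry f (x, y)‖) = ∫ s in Ioi (0:ℝ), ‖f x s‖ := rfl
        rw [e0, hnormint x hx]
        exact hbound x hx
  have hinner : ∀ x ∈ Ioi (0:ℝ), x / (x^2 + c^2) * Real.exp (-a^2 * x^2) * besselJ0 (q*x)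
      = ∫ s in Ioi (0:ℝ), f x s := by
    intro x hx
    have hx' : (0:ℝ) < x := hx
    rw [hf]
    simp only
    rw [integral_const_mul, integral_exp_neg_mul (by positivity : (0:ℝ) < c^2 + x^2)]
    ring
  have houter : ∀ s ∈ Ioi (0:ℝ), (∫ x in Ioi (0:ℝ), f x s)
      = Real.exp (-(c^2*s)) * (Real.exp (-q^2/(4*(a^2+s))) / (2*(a^2+s))) := by
    intro s hs
    have hs' : (0:ℝ) < s := hs
    have hb : (0:ℝ) < a^2 + s := by positivity
    have : ∀ x : ℝ, f x s
        = Real.exp (-(c^2*s)) * (x * Real.exp (-(a^2+s) * x^2) * besselJ0 (q*x)) := by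
      intro x
      rw [hf]
      simp only
      rw [show Real.exp (-((c^2 + x^2)*s)) = Real.exp (-(c^2*s)) * Real.exp (-(s*x^2)) by
          rw [← Real.exp_add]; congr 1; ring,
        show Real.exp (-(a^2+s)*x^2) = Real.exp (-a^2*x^2) * Real.exp (-(s*x^2)) by
          rw [← Real.exp_add]; congr 1; ring]
      ring
    rw [funext this, integral_const_mul, hankel hb q]
  calc ∫ x in Ioi (0:ℝ), x / (x^2 + c^2) * Real.exp (-a^2 * x^2) * besselJ0 (q*x)
      = ∫ x in Ioi (0:ℝ), ∫ s in Ioi (0:ℝ), f x s :=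
        setIntegral_congr_fun measurableSet_Ioi hinner
    _ = ∫ s in Ioi (0:ℝ), ∫ x in Ioi (0:ℝ), f x s := integral_integral_swap hintF
    _ = ∫ s in Ioi (0:ℝ),
          Real.exp (-(c^2*s)) * (Real.exp (-q^2/(4*(a^2+s))) / (2*(a^2+s))) :=
        setIntegral_congr_fun measurableSet_Ioi houter

/-- For all real `a > 0`, `c > 0` and `q > 0`,
`∫_0^∞ [x/(x²+c²)]·e^{−a²x²}·J₀(q·x) dx
  = e^{(ac)²}·K₀(q·c) − (1/2)·e^{−q²/(4a²)}·∑_{p=0}^∞ (a·c)^{2p}·Ψ_p(q²/(4a²))`,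
the series converging absolutely. -/
theorem hankel_gaussian_over_quadratic (a c q : ℝ) (ha : 0 < a) (hc : 0 < c) (hq : 0 < q) :
    Summable (fun p : ℕ => |(a * c) ^ (2 * p) * tricomiPsi p (q ^ 2 / (4 * a ^ 2))|) ∧
    ∫ x in Ioi (0 : ℝ), x / (x ^ 2 + c ^ 2) * Real.exp (-a ^ 2 * x ^ 2) * besselJ0 (q * x)
      = Real.exp ((a * c) ^ 2) * besselK0 (q * c)
        - 1 / 2 * Real.exp (-q ^ 2 / (4 * a ^ 2))
            * ∑' p : ℕ, (a * c) ^ (2 * p) * tricomiPsi p (q ^ 2 / (4 * a ^ 2)) := by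
  constructor
  · exact summable_main (by positivity)
  · set G : ℝ → ℝ := fun u => Real.exp (-(c^2*u) - q^2/(4*u)) / u with hG
    have hGint : IntegrableOn G (Ioi (0:ℝ)) := by
      apply (integrableOn_G (by positivity : (0:ℝ) < c^2)
        (by positivity : (0:ℝ) < q^2/4)).congr_fun _ measurableSet_Ioi
      intro u _
      rw [hG]; simp only
      rw [div_div]
    have h1 : ∫ x in Ioi (0:ℝ), x/(x^2+c^2) * Real.exp (-a^2*x^2) * besselJ0 (q*x)
        = Real.exp (a^2*c^2) * (1/2) * ∫ u in Ioi (a^2), G u := by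
      rw [fubini_step ha hc hq]
      have hpt : ∀ s ∈ Ioi (0:ℝ),
          Real.exp (-(c^2*s)) * (Real.exp (-q^2/(4*(a^2+s)))/(2*(a^2+s)))
            = Real.exp (a^2*c^2) * (1/2) * G (a^2 + s) := by
        intro s hs
        have hs' : (0:ℝ) < s := hs
        have hb : (0:ℝ) < a^2 + s := by positivity
        rw [hG]; simp only
        rw [show -(c^2*(a^2+s)) - q^2/(4*(a^2+s))
              = -(a^2*c^2) + (-(c^2*s) + -q^2/(4*(a^2+s))) by rw [neg_div]; ring,
          Real.exp_add, Real.exp_add]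
        have he : Real.exp (a^2*c^2) * Real.exp (-(a^2*c^2)) = 1 := by
          rw [← Real.exp_add]; simp
        rw [div_eq_mul_inv (Real.exp (-q^2/(4*(a^2+s)))) (2*(a^2+s)), mul_inv]
        linear_combination
          (-(Real.exp (-(c^2*s)) * Real.exp (-q^2/(4*(a^2+s))) * (a^2+s)⁻¹ * (1/2))) * he
      rw [setIntegral_congr_fun measurableSet_Ioi hpt, integral_const_mul,
        integral_Ioi_comp_add G (a^2)]
    have hK : Real.exp ((a*c)^2) * besselK0 (q*c)
        = Real.exp (a^2*c^2) * (1/2) * ∫ u in Ioi (0:ℝ), G u := by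
      rw [besselK0_qc hc hq, show ((a*c)^2 : ℝ) = a^2*c^2 by ring]
      ring
    have htail := tail_eq ha hc hq
    have hsplit : ∫ u in Ioi (0:ℝ), G u
        = (∫ u in Ioc (0:ℝ) (a^2), G u) + ∫ u in Ioi (a^2), G u := by
      rw [← setIntegral_union]
      · rw [Ioc_union_Ioi_eq_Ioi (by positivity : (0:ℝ) ≤ a^2)]
      · exact Set.disjoint_left.2 fun x hx hx' => absurd hx.2 (not_le.2 hx')
      · exact measurableSet_Ioi
      · exact hGint.mono_set (fun x hx => hx.1)
      · exact hGint.mono_set (fun x hx => lt_trans (by positivity : (0:ℝ) < a^2) hx)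
    rw [← hG] at htail
    rw [h1, hK, hsplit, show -q^2/(4*a^2) = -(q^2/(4*a^2)) by rw [neg_div]]
    linear_combination (-(1/2 : ℝ)) * htail
end

section
/- Let a > 0 and c > 0 be real and let n ≥ 1 be an integer. Define the entire function G(z) = e^{−a²z} · ∑_{k=0}^∞ (−1)^k (c²/4)^{k+n} z^{k+n} / (k!·(k+2n)!) (i.e. G(z) = e^{−a²z}·J_{2n}(c√z)). Then G^{(m)}(0) = 0 for every integer m with 0 ≤ m ≤ n−1, and for every integer m ≥ n, G^{(m)}(0) = (−1)^m · (m!/(m+n)!) · a^{2m} · (−c²/(4a²))^n · L_{m−n}^{2n}(−c²/(4a²)), where L_j^{2n} denotes the generalized Laguerre polynomial; equivalently, G^{(m)}(0) = (−1)^{m+n} · a^{2m} · ∑_{p=n}^m m! / ((m−p)!·(p−n)!·(p+n)!) · (c²/(4a²))^p. -/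
open Finset

/-- The generalized Laguerre polynomial
`L_j^α(z) = ∑_{k=0}^j binom(j+α, j−k)·(−z)^k/k!` (integer `α ≥ 0`). -/
noncomputable def genLaguerre (j : ℕ) (α : ℕ) (z : ℝ) : ℝ :=
  ∑ k ∈ Finset.range (j + 1),
    (Nat.choose (j + α) (j - k) : ℝ) * (-z) ^ k / (Nat.factorial k : ℝ)

/-- Let `a > 0`, `c > 0`, `n ≥ 1` and let `G(z) = e^{−a²z}·J_{2n}(c√z)` (entire in `z`).
Then `G^{(m)}(0) = 0` for `0 ≤ m ≤ n−1`, while for `m ≥ n`,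
`G^{(m)}(0) = (−1)^m·(m!/(m+n)!)·a^{2m}·(−c²/(4a²))^n·L_{m−n}^{2n}(−c²/(4a²))`;
equivalently `G^{(m)}(0) = (−1)^{m+n}·a^{2m}·∑_{p=n}^m m!/((m−p)!(p−n)!(p+n)!)·(c²/(4a²))^p`. -/
theorem deriv_exp_mul_besselJ2n_sqrt (a c : ℝ) (ha : 0 < a) (hc : 0 < c)
    (n : ℕ) (hn : 1 ≤ n) (G : ℂ → ℂ)
    (hG : ∀ z : ℂ, G z = Complex.exp (-(a : ℂ) ^ 2 * z)
      * ∑' k : ℕ, (-1 : ℂ) ^ k * ((c : ℂ) ^ 2 / 4) ^ (k + n) * z ^ (k + n)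
          / ((Nat.factorial k : ℂ) * (Nat.factorial (k + 2 * n) : ℂ))) :
    (∀ m : ℕ, m ≤ n - 1 → iteratedDeriv m G 0 = 0) ∧
    (∀ m : ℕ, n ≤ m →
      iteratedDeriv m G 0
        = (-1 : ℂ) ^ m * ((Nat.factorial m : ℂ) / (Nat.factorial (m + n) : ℂ))
            * (a : ℂ) ^ (2 * m) * (-(c : ℂ) ^ 2 / (4 * (a : ℂ) ^ 2)) ^ n
            * ((genLaguerre (m - n) (2 * n) (-(c ^ 2 / (4 * a ^ 2))) : ℝ) : ℂ)) ∧
    (∀ m : ℕ, n ≤ m →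
      iteratedDeriv m G 0
        = (-1 : ℂ) ^ (m + n) * (a : ℂ) ^ (2 * m)
            * ∑ p ∈ Finset.Icc n m,
                (Nat.factorial m : ℂ)
                  / ((Nat.factorial (m - p) : ℂ) * (Nat.factorial (p - n) : ℂ)
                      * (Nat.factorial (p + n) : ℂ))
                  * ((c : ℂ) ^ 2 / (4 * (a : ℂ) ^ 2)) ^ p) := by
  have ha' : (a : ℂ) ≠ 0 := Complex.ofReal_ne_zero.2 ha.ne'
  set Af : ℕ → ℂ := fun i => (-(a:ℂ)^2)^i / (Nat.factorial i : ℂ) with hAf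
  set Bf : ℕ → ℂ := fun j => if j < n then 0 else
      (-1)^(j-n) * ((c:ℂ)^2/4)^j / ((Nat.factorial (j-n) : ℂ) * (Nat.factorial (j+n) : ℂ))
    with hBf
  set Cc : ℕ → ℂ := fun m => ∑ ij ∈ Finset.HasAntidiagonal.antidiagonal m, Af ij.1 * Bf ij.2 with hCc
  -- summability of the two factor series (in norm)
  have hAs : ∀ z : ℂ, Summable fun i => ‖Af i * z ^ i‖ := by
    intro z
    have : (fun i : ℕ => ‖Af i * z^i‖)
        = fun i => (a^2 * ‖z‖)^i / (Nat.factorial i : ℝ) := by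
      funext i
      simp [hAf, norm_mul, norm_div, norm_pow, mul_pow, abs_of_nonneg (sq_nonneg a)]
      ring
    rw [this]
    exact Real.summable_pow_div_factorial _
  have hBs : ∀ z : ℂ, Summable fun j => ‖Bf j * z ^ j‖ := by
    intro z
    rw [← summable_nat_add_iff n]
    set r : ℝ := c^2/4 * ‖z‖ with hr
    have hr0 : 0 ≤ r := by positivity
    refine Summable.of_nonneg_of_le (fun k => norm_nonneg _) ?_
      ((Real.summable_pow_div_factorial r).mul_left (r^n))
    · intro k
      have h1 : ¬ (k + n < n) := by omega
      have h2 : k + n - n = k := by omega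
      have h3 : ‖Bf (k+n) * z^(k+n)‖
          = r^(k+n) / ((Nat.factorial k : ℝ) * (Nat.factorial (k+n+n) : ℝ)) := by
        simp [hBf, h1, h2, norm_mul, norm_div, norm_pow, abs_of_nonneg (sq_nonneg c), hr,
          mul_pow, div_pow, abs_div]
        ring
      rw [h3, pow_add]
      have hfk : (1:ℝ) ≤ (Nat.factorial (k+n+n) : ℝ) := by
        exact_mod_cast Nat.one_le_iff_ne_zero.2 (Nat.factorial_ne_zero _)
      have hk0 : (0:ℝ) < (Nat.factorial k : ℝ) := by positivity
      calc r^k * r^n / ((Nat.factorial k : ℝ) * (Nat.factorial (k+n+n) : ℝ))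
          ≤ r^k * r^n / ((Nat.factorial k : ℝ) * 1) := by
            apply div_le_div_of_nonneg_left (by positivity) (by positivity)
            exact mul_le_mul_of_nonneg_left hfk hk0.le
        _ = r^n * (r^k / (Nat.factorial k : ℝ)) := by ring
  -- the Bessel-type series rewritten with coefficients Bf
  have hT : ∀ z : ℂ,
      (∑' k : ℕ, (-1 : ℂ) ^ k * ((c : ℂ) ^ 2 / 4) ^ (k + n) * z ^ (k + n)
          / ((Nat.factorial k : ℂ) * (Nat.factorial (k + 2 * n) : ℂ)))
      = ∑' j : ℕ, Bf j * z ^ j := by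
    intro z
    have hsum : Summable fun j => Bf j * z ^ j := (hBs z).of_norm
    rw [← Summable.sum_add_tsum_nat_add n hsum]
    have h0 : (∑ j ∈ range n, Bf j * z ^ j) = 0 := by
      apply Finset.sum_eq_zero
      intro j hj
      have : j < n := Finset.mem_range.1 hj
      simp [hBf, this]
    rw [h0, zero_add]
    congr 1
    funext k
    have h1 : ¬ (k + n < n) := by omega
    have h2 : k + n - n = k := by omega
    have h3 : k + n + n = k + 2 * n := by omega
    simp [hBf, h1, h2, h3]
    ring
  -- exponential series
  have hE : ∀ z : ℂ, Complex.exp (-(a : ℂ) ^ 2 * z) = ∑' i : ℕ, Af i * z ^ i := by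
    intro z
    rw [Complex.exp_eq_exp_ℂ, NormedSpace.exp_eq_tsum_div]
    refine tsum_congr fun i => ?_
    simp only [hAf, mul_pow, div_mul_eq_mul_div]
  -- Cauchy product
  have hGs : ∀ z : ℂ, G z = ∑' m : ℕ, Cc m * z ^ m := by
    intro z
    rw [hG z, hT z, hE z,
      tsum_mul_tsum_eq_tsum_sum_antidiagonal_of_summable_norm (hAs z) (hBs z)]
    congr 1
    funext m
    rw [hCc, Finset.sum_mul]
    apply Finset.sum_congr rfl
    intro ij hij
    have : ij.1 + ij.2 = m := Finset.HasAntidiagonal.mem_antidiagonal.1 hij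
    rw [← this, pow_add]
    ring
  -- the power series
  set p : FormalMultilinearSeries ℂ ℂ ℂ := FormalMultilinearSeries.ofScalars ℂ Cc with hp
  have hrad : 0 < p.radius := by
    refine lt_of_lt_of_le ?_ (p.le_radius_of_summable (r := 1) ?_)
    · norm_num
    · have h1 : Summable fun m => ‖Cc m‖ := by
        have := summable_norm_sum_mul_antidiagonal_of_summable_norm
          (f := fun i => Af i * (1:ℂ)^i) (g := fun j => Bf j * (1:ℂ)^j) (hAs 1) (hBs 1)
        simpa [hCc] using this
      have : ∀ m : ℕ, ‖p m‖ = ‖Cc m‖ := fun m => by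
        rw [hp, FormalMultilinearSeries.ofScalars_norm]
      simpa [this] using h1
  have hball : HasFPowerSeriesOnBall G p 0 p.radius := by
    refine (p.hasFPowerSeriesOnBall hrad).congr ?_
    intro z _
    rw [hGs z]
    have : p.sum z = ∑' m : ℕ, Cc m • z ^ m :=
      FormalMultilinearSeries.ofScalars_sum_eq Cc z
    rw [this]
    simp [smul_eq_mul]
  have hkey : ∀ m : ℕ, iteratedDeriv m G 0 = (Nat.factorial m : ℂ) * Cc m := by
    intro m
    have h1 := hball.factorial_smul (1 : ℂ) m
    rw [iteratedDeriv_eq_iteratedFDeriv, ← h1, hp, FormalMultilinearSeries.ofScalars_apply_eq]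
    simp [smul_eq_mul]
  -- part 1
  have part1 : ∀ m : ℕ, m ≤ n - 1 → iteratedDeriv m G 0 = 0 := by
    intro m hm
    rw [hkey m]
    have hz : Cc m = 0 := by
      show (∑ ij ∈ Finset.HasAntidiagonal.antidiagonal m, Af ij.1 * Bf ij.2) = 0
      apply Finset.sum_eq_zero
      intro ij hij
      have h1 : ij.1 + ij.2 = m := Finset.HasAntidiagonal.mem_antidiagonal.1 hij
      have h2 : ij.2 < n := by omega
      simp [hBf, h2]
    rw [hz, mul_zero]
  -- Cc over Icc
  have hCIcc : ∀ m : ℕ, Cc m = ∑ q ∈ Finset.Icc n m, Af (m - q) * Bf q := by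
    intro m
    show (∑ ij ∈ Finset.HasAntidiagonal.antidiagonal m, Af ij.1 * Bf ij.2) = _
    rw [Finset.Nat.sum_antidiagonal_eq_sum_range_succ (f := fun i j => Af i * Bf j),
      ← Finset.sum_range_reflect]
    have h1 : ∀ j ∈ Finset.range (m+1),
        Af (m + 1 - 1 - j) * Bf (m - (m + 1 - 1 - j)) = Af (m - j) * Bf j := by
      intro j hj
      have hj' := Finset.mem_range.1 hj
      have e2 : m - (m + 1 - 1 - j) = j := by omega
      have e1 : m + 1 - 1 - j = m - j := by omega
      rw [e2, e1]
    rw [Finset.sum_congr rfl h1]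
    refine (Finset.sum_subset (fun x hx => ?_) (fun x hx hx' => ?_)).symm
    · simp only [Finset.mem_Icc] at hx
      simp only [Finset.mem_range]
      omega
    · have hxn : x < n := by
        simp only [Finset.mem_range] at hx
        simp only [Finset.mem_Icc, not_and, not_le] at hx'
        omega
      simp [hBf, hxn]
  have hc4 : (4:ℂ) ≠ 0 := by norm_num
  -- part 3 computation
  have part3 : ∀ m : ℕ, n ≤ m →
      (Nat.factorial m : ℂ) * Cc m
        = (-1 : ℂ) ^ (m + n) * (a : ℂ) ^ (2 * m)
            * ∑ q ∈ Finset.Icc n m,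
                (Nat.factorial m : ℂ)
                  / ((Nat.factorial (m - q) : ℂ) * (Nat.factorial (q - n) : ℂ)
                      * (Nat.factorial (q + n) : ℂ))
                  * ((c : ℂ) ^ 2 / (4 * (a : ℂ) ^ 2)) ^ q := by
    intro m hm
    rw [hCIcc m, Finset.mul_sum, Finset.mul_sum]
    apply Finset.sum_congr rfl
    intro q hq
    obtain ⟨hnq, hqm⟩ := Finset.mem_Icc.1 hq
    obtain ⟨s, rfl⟩ : ∃ s, m = q + s := ⟨m - q, by omega⟩
    obtain ⟨r, rfl⟩ : ∃ r, q = n + r := ⟨q - n, by omega⟩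
    have h1 : ¬ (n + r < n) := by omega
    simp only [hAf, hBf, if_neg h1]
    have e1 : n + r + s - (n + r) = s := by omega
    have e2 : n + r - n = r := by omega
    rw [e1, e2]
    have hs : ((-1:ℂ))^(n + r + s + n) = (-1)^(s + r) := by
      rw [show n + r + s + n = 2*n + (s + r) by ring, pow_add, pow_mul]
      norm_num
    rw [hs]
    have f1 : ((Nat.factorial s : ℂ)) ≠ 0 := Nat.cast_ne_zero.2 (Nat.factorial_ne_zero _)
    have f2 : ((Nat.factorial r : ℂ)) ≠ 0 := Nat.cast_ne_zero.2 (Nat.factorial_ne_zero _)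
    have f3 : ((Nat.factorial (n + r + n) : ℂ)) ≠ 0 := Nat.cast_ne_zero.2 (Nat.factorial_ne_zero _)
    field_simp
    ring_nf
    simp only [inv_pow]
    field_simp
  refine ⟨part1, ?_, fun m hm => (hkey m).trans (part3 m hm)⟩
  -- part 2
  intro m hm
  rw [hkey m, part3 m hm]
  obtain ⟨d, rfl⟩ : ∃ d, m = n + d := ⟨m - n, by omega⟩
  have e1 : n + d - n = d := by omega
  rw [e1]
  set u : ℂ := (c:ℂ)^2/(4*(a:ℂ)^2) with hu
  have hgl : ((genLaguerre d (2*n) (-(c^2/(4*a^2))) : ℝ) : ℂ)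
      = ∑ k ∈ Finset.range (d+1),
          (Nat.choose (d+2*n) (d-k) : ℂ) * u^k / (Nat.factorial k : ℂ) := by
    unfold genLaguerre
    push_cast
    refine Finset.sum_congr rfl fun k hk => ?_
    rw [neg_neg, hu]
  rw [hgl]
  -- reindex the Icc sum
  have hre : (∑ q ∈ Finset.Icc n (n+d),
      (Nat.factorial (n+d) : ℂ)
        / ((Nat.factorial (n+d-q) : ℂ) * (Nat.factorial (q-n) : ℂ) * (Nat.factorial (q+n) : ℂ))
        * u ^ q)
      = ∑ k ∈ Finset.range (d+1),
          (Nat.factorial (n+d) : ℂ)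
            / ((Nat.factorial (d-k) : ℂ) * (Nat.factorial k : ℂ) * (Nat.factorial (k+n+n) : ℂ))
            * u ^ (k+n) := by
    refine Finset.sum_bij' (fun q _ => q - n) (fun k _ => k + n) ?_ ?_ ?_ ?_ ?_
    · intro q hq
      obtain ⟨h1, h2⟩ := Finset.mem_Icc.1 hq
      simp only [Finset.mem_range]
      omega
    · intro k hk
      have := Finset.mem_range.1 hk
      simp only [Finset.mem_Icc]
      omega
    · intro q hq
      obtain ⟨h1, h2⟩ := Finset.mem_Icc.1 hq
      show q - n + n = q
      omega
    · intro k hk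
      show k + n - n = k
      omega
    · intro q hq
      obtain ⟨h1, h2⟩ := Finset.mem_Icc.1 hq
      have e2 : n + d - q = d - (q - n) := by omega
      have e3 : q - n + n + n = q + n := by omega
      have e4 : q - n + n = q := by omega
      rw [e2, e3, e4]
  rw [hre, Finset.mul_sum, Finset.mul_sum]
  apply Finset.sum_congr rfl
  intro k hk
  have hkd : k ≤ d := by have := Finset.mem_range.1 hk; omega
  obtain ⟨t, rfl⟩ : ∃ t, d = k + t := ⟨d - k, by omega⟩
  have e5 : k + t - k = t := by omega
  rw [e5]
  have hch : ((k+t+2*n).choose t : ℂ)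
      = (Nat.factorial (k+t+2*n) : ℂ) / ((Nat.factorial t : ℂ) * (Nat.factorial (k+2*n) : ℂ)) := by
    rw [Nat.cast_choose ℂ (show t ≤ k+t+2*n by omega),
      show k+t+2*n-t = k+2*n from by omega]
  rw [hch]
  have hsgn : ((-1:ℂ)) ^ (n + (k+t) + n) = (-1:ℂ) ^ (k+t) := by
    rw [show n + (k+t) + n = 2*n + (k+t) by ring, pow_add, pow_mul]
    norm_num
  have hnp : (-(c:ℂ)^2/(4*(a:ℂ)^2))^n = (-1:ℂ)^n * u^n := by
    rw [hu, neg_div, neg_pow]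
  have f1 : ((Nat.factorial t : ℂ)) ≠ 0 := Nat.cast_ne_zero.2 (Nat.factorial_ne_zero _)
  have f2 : ((Nat.factorial k : ℂ)) ≠ 0 := Nat.cast_ne_zero.2 (Nat.factorial_ne_zero _)
  have f3 : ((Nat.factorial (k+2*n) : ℂ)) ≠ 0 := Nat.cast_ne_zero.2 (Nat.factorial_ne_zero _)
  have f4 : ((Nat.factorial (n+(k+t)+n) : ℂ)) ≠ 0 := Nat.cast_ne_zero.2 (Nat.factorial_ne_zero _)
  have f5 : ((Nat.factorial (k+t+2*n) : ℂ)) ≠ 0 := Nat.cast_ne_zero.2 (Nat.factorial_ne_zero _)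
  have e6 : (Nat.factorial (k+t+2*n) : ℂ) = (Nat.factorial (n+(k+t)+n) : ℂ) := by
    rw [show k+t+2*n = n+(k+t)+n from by omega]
  have e7 : (Nat.factorial (k+n+n) : ℂ) = (Nat.factorial (k+2*n) : ℂ) := by
    rw [show k+n+n = k+2*n from by omega]
  rw [hsgn, hnp, e6, e7]
  field_simp
  ring_nf
  rw [show ((-1:ℂ))^(n*2) = 1 from by rw [mul_comm n 2, pow_mul]; norm_num]
  ring
end

section
/- Let a > 0 and c > 0 be real. Define the entire function G(z) = e^{−a²z} · ∑_{k=0}^∞ (−1)^k (c²z/4)^k / (k!)² (i.e. G(z) = e^{−a²z}·J₀(c√z)). Then for every integer m ≥ 0, G^{(m)}(0) = (−1)^m · a^{2m} · L_m(−c²/(4a²)), where L_m(z) = ∑_{k=0}^m binom(m, k)·(−z)^k/k! is the m-th Laguerre polynomial; equivalently, the coefficients ḡ^{(m)}(0) in the expansion G(z) = ∑_{m=0}^∞ (ḡ^{(m)}(0)/m!)·(−z)^m are ḡ^{(m)}(0) = a^{2m}·L_m(−c²/(4a²)), and they are strictly positive. -/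
open Finset

/-- The `m`-th Laguerre polynomial `L_m(z) = ∑_{k=0}^m binom(m,k)·(−z)^k/k!`. -/
noncomputable def laguerre (m : ℕ) (z : ℝ) : ℝ :=
  ∑ k ∈ Finset.range (m + 1), (Nat.choose m k : ℝ) * (-z) ^ k / (Nat.factorial k : ℝ)

noncomputable def eCoeff (a : ℝ) (n : ℕ) : ℂ := (-(a : ℂ) ^ 2) ^ n / (n.factorial : ℂ)
noncomputable def bCoeff (c : ℝ) (k : ℕ) : ℂ := (-(c : ℂ) ^ 2 / 4) ^ k / (k.factorial : ℂ) ^ 2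
noncomputable def gCoeff (a c : ℝ) (n : ℕ) : ℂ :=
  ∑ k ∈ Finset.range (n + 1), eCoeff a k * bCoeff c (n - k)

lemma summable_e (a : ℝ) (z : ℂ) : Summable fun n => ‖eCoeff a n * z ^ n‖ := by
  apply (Real.summable_pow_div_factorial (a ^ 2 * ‖z‖)).congr
  intro n
  simp [eCoeff, norm_mul, norm_div, norm_pow, mul_pow, mul_div_assoc, sq_abs, abs_of_pos,
    mul_comm, div_mul_eq_mul_div]

lemma summable_b (c : ℝ) (z : ℂ) : Summable fun k => ‖bCoeff c k * z ^ k‖ := by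
  have h := Real.summable_pow_div_factorial (c ^ 2 / 4 * ‖z‖)
  refine Summable.of_nonneg_of_le (fun k => norm_nonneg _) (fun k => ?_) h
  have hk1 : (1 : ℝ) ≤ (Nat.factorial k : ℝ) := by
    exact_mod_cast Nat.one_le_iff_ne_zero.mpr k.factorial_ne_zero
  have h0 : (0:ℝ) < (Nat.factorial k : ℝ) := by positivity
  have heq : ‖bCoeff c k * z ^ k‖ = (c ^ 2 / 4 * ‖z‖) ^ k / ((Nat.factorial k : ℝ)) ^ 2 := by
    simp [bCoeff, norm_mul, norm_div, norm_pow, mul_pow, sq_abs, abs_div]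
    ring
  rw [heq, div_le_div_iff₀ (by positivity) h0]
  have hnum : (0:ℝ) ≤ (c ^ 2 / 4 * ‖z‖) ^ k := by positivity
  have h2 : (Nat.factorial k : ℝ) ≤ ((Nat.factorial k : ℝ)) ^ 2 := by nlinarith
  exact mul_le_mul_of_nonneg_left h2 hnum

lemma inner_sum_eq (a c : ℝ) (z : ℂ) (n : ℕ) :
    ∑ k ∈ Finset.range (n + 1), (eCoeff a k * z ^ k) * (bCoeff c (n - k) * z ^ (n - k))
      = gCoeff a c n * z ^ n := by
  rw [gCoeff, Finset.sum_mul]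
  refine Finset.sum_congr rfl fun k hk => ?_
  have hk' : k ≤ n := Finset.mem_range_succ_iff.mp hk
  rw [show eCoeff a k * z ^ k * (bCoeff c (n - k) * z ^ (n - k))
      = eCoeff a k * bCoeff c (n - k) * (z ^ k * z ^ (n - k)) by ring,
    ← pow_add, Nat.add_sub_cancel' hk']

lemma hasSum_G (a c : ℝ) (G : ℂ → ℂ)
    (hG : ∀ z : ℂ, G z = Complex.exp (-(a : ℂ) ^ 2 * z)
      * ∑' k : ℕ, (-1 : ℂ) ^ k * ((c : ℂ) ^ 2 * z / 4) ^ k / ((Nat.factorial k : ℂ)) ^ 2)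
    (z : ℂ) : HasSum (fun n => gCoeff a c n * z ^ n) (G z) := by
  have he : Complex.exp (-(a : ℂ) ^ 2 * z) = ∑' n : ℕ, eCoeff a n * z ^ n := by
    rw [Complex.exp_eq_exp_ℂ, NormedSpace.exp_eq_tsum_div]
    refine tsum_congr fun n => ?_
    rw [eCoeff, mul_pow]
    ring
  have hb : (∑' k : ℕ, (-1 : ℂ) ^ k * ((c : ℂ) ^ 2 * z / 4) ^ k / ((Nat.factorial k : ℂ)) ^ 2)
      = ∑' k : ℕ, bCoeff c k * z ^ k := by
    refine tsum_congr fun k => ?_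
    rw [bCoeff]
    calc (-1 : ℂ) ^ k * ((c : ℂ) ^ 2 * z / 4) ^ k / ((Nat.factorial k : ℂ)) ^ 2
        = ((-1 : ℂ) * ((c : ℂ) ^ 2 * z / 4)) ^ k / ((Nat.factorial k : ℂ)) ^ 2 := by
          rw [mul_pow]
      _ = ((-(c : ℂ) ^ 2 / 4) * z) ^ k / ((Nat.factorial k : ℂ)) ^ 2 := by ring_nf
      _ = (-(c : ℂ) ^ 2 / 4) ^ k / ((Nat.factorial k : ℂ)) ^ 2 * z ^ k := by
          rw [mul_pow]; ring
  have h1 := hasSum_sum_range_mul_of_summable_norm (summable_e a z) (summable_b c z)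
  simp only [inner_sum_eq] at h1
  rw [hG z, he, hb]
  exact h1

lemma hasFPS (a c : ℝ) (G : ℂ → ℂ)
    (hG : ∀ z : ℂ, G z = Complex.exp (-(a : ℂ) ^ 2 * z)
      * ∑' k : ℕ, (-1 : ℂ) ^ k * ((c : ℂ) ^ 2 * z / 4) ^ k / ((Nat.factorial k : ℂ)) ^ 2) :
    HasFPowerSeriesOnBall G (FormalMultilinearSeries.ofScalars ℂ (gCoeff a c)) 0 ⊤ := by
  constructor
  · refine le_of_eq (FormalMultilinearSeries.radius_eq_top_of_summable_norm _ ?_).symm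
    intro r
    have h1 := summable_norm_sum_mul_range_of_summable_norm (summable_e a ((r : ℝ) : ℂ))
      (summable_b c ((r : ℝ) : ℂ))
    simp only [inner_sum_eq] at h1
    apply h1.congr
    intro n
    rw [FormalMultilinearSeries.ofScalars_norm, norm_mul, norm_pow, Complex.norm_real,
      Real.norm_eq_abs, abs_of_nonneg r.coe_nonneg]
  · exact ENNReal.zero_lt_top
  · intro y _
    have := hasSum_G a c G hG y
    simp only [FormalMultilinearSeries.ofScalars_apply_eq, smul_eq_mul, zero_add]
    exact this

lemma key_alg (a c : ℝ) (ha : a ≠ 0) (m : ℕ) :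
    (Nat.factorial m : ℂ) * gCoeff a c m
      = (-1 : ℂ) ^ m * ((a ^ (2 * m) * laguerre m (-(c ^ 2 / (4 * a ^ 2))) : ℝ) : ℂ) := by
  have ha' : (a : ℂ) ≠ 0 := by exact_mod_cast ha
  rw [gCoeff, laguerre]
  push_cast
  rw [← Finset.sum_range_reflect]
  simp only [Nat.add_sub_cancel, Finset.mul_sum]
  refine Finset.sum_congr rfl fun k hk => ?_
  have hk' : k ≤ m := Finset.mem_range_succ_iff.mp hk
  rw [Nat.sub_sub_self hk']
  have hmk : (m - k) + k = m := Nat.sub_add_cancel hk'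
  have hfk : ((Nat.factorial k : ℂ)) ≠ 0 := by exact_mod_cast k.factorial_ne_zero
  have hfmk : ((Nat.factorial (m - k) : ℂ)) ≠ 0 := by exact_mod_cast (m - k).factorial_ne_zero
  have hsign : ((-1 : ℂ)) ^ m = (-1 : ℂ) ^ (m - k) * (-1 : ℂ) ^ k := by
    rw [← pow_add, hmk]
  have hpow : ((a : ℂ)) ^ (2 * m) = ((a : ℂ) ^ 2) ^ (m - k) * ((a : ℂ) ^ 2) ^ k := by
    rw [← pow_add, hmk, ← pow_mul]
  have hch : (Nat.choose m k : ℂ)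
      = (Nat.factorial m : ℂ) / ((Nat.factorial k : ℂ) * (Nat.factorial (m - k) : ℂ)) :=
    Nat.cast_choose ℂ hk'
  have hea : (-(a : ℂ) ^ 2) ^ (m - k) = (-1 : ℂ) ^ (m - k) * ((a : ℂ) ^ 2) ^ (m - k) := by
    rw [neg_pow]
  have heb : (-(c : ℂ) ^ 2 / 4) ^ k = (-1 : ℂ) ^ k * ((c : ℂ) ^ 2 / 4) ^ k := by
    rw [neg_div, neg_pow]
  have hx : (- -((c : ℂ) ^ 2 / (4 * (a : ℂ) ^ 2))) ^ k
      = ((c : ℂ) ^ 2 / 4) ^ k / ((a : ℂ) ^ 2) ^ k := by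
    rw [neg_neg, ← div_pow]
    congr 1
    field_simp
  rw [eCoeff, bCoeff, hsign, hpow, hch, hea, heb, hx]
  field_simp

lemma lag_pos (a c : ℝ) (ha : 0 < a) (hc : 0 < c) (m : ℕ) :
    0 < a ^ (2 * m) * laguerre m (-(c ^ 2 / (4 * a ^ 2))) := by
  have hlag : 0 < laguerre m (-(c ^ 2 / (4 * a ^ 2))) := by
    rw [laguerre]
    simp only [neg_neg]
    refine Finset.sum_pos (fun k hk => ?_) ⟨0, Finset.mem_range.mpr (Nat.succ_pos m)⟩
    have hk' : k ≤ m := Finset.mem_range_succ_iff.mp hk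
    have hch : 0 < (Nat.choose m k : ℝ) := by exact_mod_cast Nat.choose_pos hk'
    have hfac : 0 < (Nat.factorial k : ℝ) := by positivity
    have hx : 0 < c ^ 2 / (4 * a ^ 2) := by positivity
    positivity
  positivity

/-- Let `a > 0`, `c > 0` and let `G(z) = e^{−a²z}·J₀(c√z)` (as an entire function of `z`).
Then `G^{(m)}(0) = (−1)^m·a^{2m}·L_m(−c²/(4a²))` for every `m ≥ 0`; equivalently the
coefficients `ḡ^{(m)}(0)` in `G(z) = ∑ (ḡ^{(m)}(0)/m!)·(−z)^m` are
`ḡ^{(m)}(0) = a^{2m}·L_m(−c²/(4a²))`, and they are strictly positive. -/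
theorem deriv_exp_mul_besselJ0_sqrt (a c : ℝ) (ha : 0 < a) (hc : 0 < c)
    (G : ℂ → ℂ)
    (hG : ∀ z : ℂ, G z = Complex.exp (-(a : ℂ) ^ 2 * z)
      * ∑' k : ℕ, (-1 : ℂ) ^ k * ((c : ℂ) ^ 2 * z / 4) ^ k / ((Nat.factorial k : ℂ)) ^ 2) :
    ∀ m : ℕ,
      iteratedDeriv m G 0
        = (-1 : ℂ) ^ m * ((a ^ (2 * m) * laguerre m (-(c ^ 2 / (4 * a ^ 2))) : ℝ) : ℂ) ∧
      0 < a ^ (2 * m) * laguerre m (-(c ^ 2 / (4 * a ^ 2))) := by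
  intro m
  refine ⟨?_, lag_pos a c ha hc m⟩
  have hball := hasFPS a c G hG
  have hfd := hball.factorial_smul (1 : ℂ) m
  have hder : iteratedDeriv m G 0 = (Nat.factorial m : ℂ) * gCoeff a c m := by
    rw [iteratedDeriv_eq_iteratedFDeriv, ← hfd, FormalMultilinearSeries.ofScalars_apply_eq]
    simp [nsmul_eq_mul]
  rw [hder, key_alg a c (ne_of_gt ha) m]
end

section
/- For every real x > 0, ∑_{p=0}^∞ [ψ(p+1)/p!]·x^p = e^x·(Γ(0, x) + ln x), where ψ(p+1) = −γ + ∑_{j=1}^p 1/j is the digamma function at the positive integer p+1 (γ being the Euler–Mascheroni constant) and Γ(0, x) = ∫_x^∞ e^{−t}/t dt; the series on the left converges absolutely. -/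
open MeasureTheory Real Set Filter Topology Finset

local notation "γ" => Real.eulerMascheroniConstant


lemma aux_abs_log_le {t : ℝ} (ht : 0 < t) : |Real.log t| ≤ 2 * t ^ (-(1:ℝ)/2) + t := by
  rcases le_total 1 t with h | h
  · rw [abs_of_nonneg (Real.log_nonneg h)]
    have h1 : Real.log t ≤ t - 1 := Real.log_le_sub_one_of_pos ht
    have h2 : (0:ℝ) ≤ 2 * t ^ (-(1:ℝ)/2) := by positivity
    linarith
  · rw [abs_of_nonpos (Real.log_nonpos ht.le h)]
    have h1 : Real.log (t ^ (-(1:ℝ)/2)) = (-(1:ℝ)/2) * Real.log t := Real.log_rpow ht _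
    have h2 : Real.log (t ^ (-(1:ℝ)/2)) ≤ t ^ (-(1:ℝ)/2) - 1 :=
      Real.log_le_sub_one_of_pos (Real.rpow_pos_of_pos ht _)
    nlinarith [ht.le]

lemma aux_int_log_exp : IntegrableOn (fun t : ℝ => Real.log t * Real.exp (-t)) (Ioi 0) := by
  have key : ∀ s : ℝ, -1 < s → IntegrableOn (fun t : ℝ => t ^ s * Real.exp (-t)) (Ioi 0) := by
    intro s hs
    have := integrableOn_rpow_mul_exp_neg_rpow (p := 1) (s := s) hs one_pos
    exact this.congr_fun (fun t ht => by simp only [Real.rpow_one]) measurableSet_Ioi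
  have h1 := (key (-(1:ℝ)/2) (by norm_num)).const_mul 2
  have h2 : IntegrableOn (fun t : ℝ => t * Real.exp (-t)) (Ioi 0) := by
    have := key 1 (by norm_num)
    exact this.congr_fun (fun t ht => by simp only [Real.rpow_one]) measurableSet_Ioi
  refine Integrable.mono' (h1.add h2) ?_ ?_
  · exact (Real.measurable_log.mul
      (Real.measurable_exp.comp measurable_neg)).aestronglyMeasurable
  · filter_upwards [ae_restrict_mem measurableSet_Ioi] with t ht
    have ht0 : (0:ℝ) < t := ht
    have he : 0 < Real.exp (-t) := Real.exp_pos _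
    rw [Real.norm_eq_abs, abs_mul, abs_of_pos he]
    have := aux_abs_log_le ht0
    calc |Real.log t| * Real.exp (-t) ≤ (2 * t ^ (-(1:ℝ)/2) + t) * Real.exp (-t) :=
          mul_le_mul_of_nonneg_right this he.le
      _ = 2 * (t ^ (-(1:ℝ)/2) * Real.exp (-t)) + t * Real.exp (-t) := by ring

lemma aux_int_exp_div (x : ℝ) (hx : 0 < x) :
    IntegrableOn (fun t : ℝ => Real.exp (-t) / t) (Ioi x) := by
  have hg : IntegrableOn (fun t : ℝ => Real.exp (-t) * x⁻¹) (Ioi x) := by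
    have := (exp_neg_integrableOn_Ioi x (b := 1) one_pos)
    exact (this.congr_fun (fun t _ => by rw [neg_one_mul]) measurableSet_Ioi).mul_const _
  refine Integrable.mono' hg ?_ ?_
  · exact ((Real.measurable_exp.comp measurable_neg).div measurable_id).aestronglyMeasurable
  · filter_upwards [ae_restrict_mem measurableSet_Ioi] with t ht
    have htx : x < t := ht
    have ht0 : 0 < t := hx.trans htx
    rw [Real.norm_eq_abs, abs_of_pos (by positivity)]
    rw [div_eq_mul_inv]
    have : t⁻¹ ≤ x⁻¹ := by
      apply inv_anti₀ hx htx.le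
    exact mul_le_mul_of_nonneg_left this (Real.exp_pos _).le

lemma aux_gamma_int : ∫ t in Ioi (0:ℝ), Real.log t * Real.exp (-t) = -γ := by
  have h1 : HasDerivAt Complex.GammaIntegral
      (∫ t : ℝ in Ioi 0, (t : ℂ) ^ ((1:ℂ) - 1) * (Real.log t * Real.exp (-t))) 1 :=
    Complex.hasDerivAt_GammaIntegral (by norm_num)
  have heq : (∫ t : ℝ in Ioi 0, (t : ℂ) ^ ((1:ℂ) - 1) * (Real.log t * Real.exp (-t)))
      = ((∫ t : ℝ in Ioi 0, Real.log t * Real.exp (-t) : ℝ) : ℂ) := by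
    rw [show (∫ t : ℝ in Ioi 0, (t : ℂ) ^ ((1:ℂ) - 1) * (Real.log t * Real.exp (-t)))
        = ∫ t : ℝ in Ioi 0, ((Real.log t * Real.exp (-t) : ℝ) : ℂ) from
      setIntegral_congr_fun measurableSet_Ioi (fun t ht => by
        rw [sub_self, Complex.cpow_zero, one_mul]; push_cast; ring)]
    exact integral_ofReal
  rw [heq] at h1
  have h2 : Complex.Gamma =ᶠ[nhds (1:ℂ)] Complex.GammaIntegral := by
    filter_upwards [IsOpen.mem_nhds (isOpen_lt continuous_const Complex.continuous_re)
      (by norm_num : (0:ℝ) < (1:ℂ).re)] with s hs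
    exact Complex.Gamma_eq_integral hs
  have h3 : HasDerivAt Complex.Gamma
      ((∫ t : ℝ in Ioi 0, Real.log t * Real.exp (-t) : ℝ) : ℂ) 1 :=
    h1.congr_of_eventuallyEq h2
  have h4 := Complex.hasDerivAt_Gamma_one
  have h5 := h3.unique h4
  exact_mod_cast h5

lemma aux_parts (x : ℝ) (hx : 0 < x) :
    ∫ t in Ioi x, Real.exp (-t) / t
      = -(Real.exp (-x) * Real.log x) + ∫ t in Ioi x, Real.log t * Real.exp (-t) := by
  have hint1 : IntegrableOn (fun t : ℝ => Real.log t * Real.exp (-t)) (Ioi x) :=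
    aux_int_log_exp.mono (Ioi_subset_Ioi hx.le) le_rfl
  have hint2 := aux_int_exp_div x hx
  have hderiv : ∀ t ∈ Ici x, HasDerivAt (fun t : ℝ => -(Real.exp (-t) * Real.log t))
      (Real.log t * Real.exp (-t) - Real.exp (-t) / t) t := by
    intro t ht
    have ht0 : 0 < t := lt_of_lt_of_le hx ht
    have h1 : HasDerivAt (fun t : ℝ => Real.exp (-t)) (-Real.exp (-t)) t := by
      exact ((hasDerivAt_neg t).exp).congr_deriv (by ring)
    have h2 : HasDerivAt Real.log t⁻¹ t := Real.hasDerivAt_log ht0.ne'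
    have := (h1.mul h2).neg
    exact this.congr_deriv (by ring)
  have htend : Tendsto (fun t : ℝ => -(Real.exp (-t) * Real.log t)) atTop (nhds 0) := by
    rw [← neg_zero]
    apply Tendsto.neg
    have h0 : Tendsto (fun t : ℝ => t * Real.exp (-t)) atTop (nhds 0) := by
      simpa using tendsto_pow_mul_exp_neg_atTop_nhds_zero 1
    apply squeeze_zero_norm' _ h0
    filter_upwards [eventually_ge_atTop (1:ℝ)] with t ht
    have ht0 : (0:ℝ) < t := by linarith
    have hlog : 0 ≤ Real.log t := Real.log_nonneg ht
    have hl : Real.log t ≤ t := (Real.log_le_sub_one_of_pos ht0).trans (by linarith)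
    rw [norm_eq_abs, abs_mul, abs_of_pos (Real.exp_pos _), abs_of_nonneg hlog, mul_comm]
    exact mul_le_mul_of_nonneg_right hl (Real.exp_pos _).le
  have key := integral_Ioi_of_hasDerivAt_of_tendsto'
    (f := fun t : ℝ => -(Real.exp (-t) * Real.log t))
    (f' := fun t : ℝ => Real.log t * Real.exp (-t) - Real.exp (-t) / t)
    hderiv (hint1.sub hint2) htend
  rw [integral_sub hint1 hint2] at key
  simp only [zero_sub, neg_neg] at key
  linarith [key]

lemma aux_split (x : ℝ) (hx : 0 < x) :
    ∫ t in Ioi x, Real.log t * Real.exp (-t)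
      = -γ - ∫ t in Ioc 0 x, Real.log t * Real.exp (-t) := by
  have hu : Ioc 0 x ∪ Ioi x = Ioi (0:ℝ) := Ioc_union_Ioi_eq_Ioi hx.le
  have hdisj : Disjoint (Ioc 0 x) (Ioi x) := Ioc_disjoint_Ioi le_rfl
  have h1 : IntegrableOn (fun t : ℝ => Real.log t * Real.exp (-t)) (Ioc 0 x) :=
    aux_int_log_exp.mono Ioc_subset_Ioi_self le_rfl
  have h2 : IntegrableOn (fun t : ℝ => Real.log t * Real.exp (-t)) (Ioi x) :=
    aux_int_log_exp.mono (Ioi_subset_Ioi hx.le) le_rfl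
  have := setIntegral_union hdisj measurableSet_Ioi h1 h2
  rw [hu, aux_gamma_int] at this
  linarith

lemma aux_int_g (b : ℝ) : IntegrableOn (fun t : ℝ => (1 - Real.exp (-t)) / t) (Ioc 0 b) := by
  have hmeas : AEStronglyMeasurable (fun t : ℝ => (1 - Real.exp (-t)) / t)
      (volume.restrict (Ioc (0:ℝ) b)) := by
    refine ContinuousOn.aestronglyMeasurable ?_ measurableSet_Ioc
    exact ((continuous_const.sub (Real.continuous_exp.comp continuous_neg)).continuousOn).div
      continuousOn_id (fun t ht => ht.1.ne')
  refine Integrable.mono' (integrable_const 1) hmeas ?_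
  filter_upwards [ae_restrict_mem measurableSet_Ioc] with t ht
  have ht0 : 0 < t := ht.1
  have h1 : 1 - Real.exp (-t) ≤ t := by
    have := Real.add_one_le_exp (-t); linarith
  have h2 : 0 ≤ 1 - Real.exp (-t) := by
    have : Real.exp (-t) ≤ 1 := Real.exp_le_one_iff.mpr (by linarith)
    linarith
  rw [Real.norm_eq_abs, abs_of_nonneg (by positivity)]
  rw [div_le_one ht0]
  linarith

lemma aux_int_f1 (b : ℝ) : IntegrableOn (fun t : ℝ => Real.log t * Real.exp (-t)) (Ioc 0 b) :=
  aux_int_log_exp.mono Ioc_subset_Ioi_self le_rfl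

lemma aux_key (x : ℝ) (hx : 0 < x) :
    (1 - Real.exp (-x)) * Real.log x - ∫ t in Ioc 0 x, Real.log t * Real.exp (-t)
      = ∫ t in Ioc 0 x, (1 - Real.exp (-t)) / t := by
  set f1 : ℝ → ℝ := fun t => Real.log t * Real.exp (-t) with hf1def
  set g : ℝ → ℝ := fun t => (1 - Real.exp (-t)) / t with hgdef
  set H : ℝ → ℝ := fun y =>
    (1 - Real.exp (-y)) * Real.log y - (∫ t in (0:ℝ)..y, f1 t) - ∫ t in (0:ℝ)..y, g t with hHdef
  have hcontf1 : ContinuousOn f1 (Ioi 0) := by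
    exact (Real.continuousOn_log.mono (fun t ht => ne_of_gt ht)).mul
      (Real.continuous_exp.comp continuous_neg).continuousOn
  have hcontg : ContinuousOn g (Ioi 0) := by
    exact ((continuous_const.sub (Real.continuous_exp.comp continuous_neg)).continuousOn).div
      continuousOn_id (fun t ht => ne_of_gt ht)
  -- derivative of H is zero on Ioi 0
  have hH : ∀ y ∈ Ioi (0:ℝ), HasDerivAt H 0 y := by
    intro y hy
    have hy0 : (0:ℝ) < y := hy
    have hexp : HasDerivAt (fun t : ℝ => Real.exp (-t)) (-Real.exp (-y)) y := by
      exact ((hasDerivAt_neg y).exp).congr_deriv (by ring)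
    have hA : HasDerivAt (fun y : ℝ => (1 - Real.exp (-y)) * Real.log y)
        (Real.exp (-y) * Real.log y + (1 - Real.exp (-y)) * y⁻¹) y := by
      have := ((hasDerivAt_const y (1:ℝ)).sub hexp).mul (Real.hasDerivAt_log hy0.ne')
      exact this.congr_deriv (by simp only [Pi.sub_apply]; ring)
    have hmeasf1 : StronglyMeasurableAtFilter f1 (nhds y) :=
      ⟨Ioi 0, Ioi_mem_nhds hy0, hcontf1.aestronglyMeasurable measurableSet_Ioi⟩
    have hmeasg : StronglyMeasurableAtFilter g (nhds y) :=
      ⟨Ioi 0, Ioi_mem_nhds hy0, hcontg.aestronglyMeasurable measurableSet_Ioi⟩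
    have hB : HasDerivAt (fun u : ℝ => ∫ t in (0:ℝ)..u, f1 t) (f1 y) y := by
      refine intervalIntegral.integral_hasDerivAt_right ?_ hmeasf1 ?_
      · exact (intervalIntegrable_iff_integrableOn_Ioc_of_le hy0.le).mpr (aux_int_f1 y)
      · exact hcontf1.continuousAt (Ioi_mem_nhds hy0)
    have hC : HasDerivAt (fun u : ℝ => ∫ t in (0:ℝ)..u, g t) (g y) y := by
      refine intervalIntegral.integral_hasDerivAt_right ?_ hmeasg ?_
      · exact (intervalIntegrable_iff_integrableOn_Ioc_of_le hy0.le).mpr (aux_int_g y)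
      · exact hcontg.continuousAt (Ioi_mem_nhds hy0)
    have := (hA.sub hB).sub hC
    exact this.congr_deriv (by simp only [hf1def, hgdef]; ring)
  -- H is constant on (0, x]
  have hconst : ∀ a ∈ Ioc (0:ℝ) x, H x = H a := by
    intro a ha
    have h1 : ContinuousOn H (Icc a x) := by
      intro y hy
      exact ((hH y (lt_of_lt_of_le ha.1 hy.1)).continuousAt).continuousWithinAt
    have h2 : ∀ y ∈ Ico a x, HasDerivWithinAt H 0 (Ici y) y := fun y hy =>
      (hH y (lt_of_lt_of_le ha.1 hy.1)).hasDerivWithinAt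
    exact constant_of_has_deriv_right_zero h1 h2 x ⟨ha.2, le_rfl⟩
  -- H tends to 0 at 0⁺
  have htend : Tendsto H (nhdsWithin 0 (Ioi 0)) (nhds 0) := by
    have T1 : Tendsto (fun y : ℝ => (1 - Real.exp (-y)) * Real.log y)
        (nhdsWithin 0 (Ioi 0)) (nhds 0) := by
      have h0 : Tendsto (fun y : ℝ => Real.log y * y ^ (1:ℝ))
          (nhdsWithin 0 (Ioi 0)) (nhds 0) := tendsto_log_mul_rpow_nhdsGT_zero one_pos
      have h0' : Tendsto (fun y : ℝ => |Real.log y * y|) (nhdsWithin 0 (Ioi 0)) (nhds 0) := by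
        have := h0.abs
        rw [abs_zero] at this
        refine this.congr (fun y => by rw [Real.rpow_one])
      refine squeeze_zero_norm' ?_ h0'
      filter_upwards [self_mem_nhdsWithin] with y hy
      have hy0 : (0:ℝ) < y := hy
      have h1 : 1 - Real.exp (-y) ≤ y := by
        have := Real.add_one_le_exp (-y); linarith
      have h2 : 0 ≤ 1 - Real.exp (-y) := by
        have : Real.exp (-y) ≤ 1 := Real.exp_le_one_iff.mpr (by linarith)
        linarith
      rw [Real.norm_eq_abs, abs_mul, abs_mul, abs_of_nonneg h2, abs_of_pos hy0, mul_comm]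
      exact mul_le_mul_of_nonneg_left h1 (abs_nonneg _)
    have hle : nhdsWithin (0:ℝ) (Ioi 0) ≤ nhdsWithin (0:ℝ) (Icc 0 1) := by
      rw [← nhdsWithin_Ioc_eq_nhdsGT (zero_lt_one (α := ℝ))]
      exact nhdsWithin_mono 0 Ioc_subset_Icc_self
    have T2 : Tendsto (fun y : ℝ => ∫ t in (0:ℝ)..y, f1 t) (nhdsWithin 0 (Ioi 0)) (nhds 0) := by
      have hint : IntegrableOn f1 (uIcc 0 1) := by
        rw [Set.uIcc_of_le zero_le_one, integrableOn_Icc_iff_integrableOn_Ioc]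
        exact aux_int_f1 1
      have hco := intervalIntegral.continuousOn_primitive_interval hint
      have := (hco 0 (by rw [Set.uIcc_of_le zero_le_one]; exact ⟨le_rfl, zero_le_one⟩)).tendsto
      rw [intervalIntegral.integral_same] at this
      rw [Set.uIcc_of_le zero_le_one] at this
      exact this.mono_left hle
    have T3 : Tendsto (fun y : ℝ => ∫ t in (0:ℝ)..y, g t) (nhdsWithin 0 (Ioi 0)) (nhds 0) := by
      have hint : IntegrableOn g (uIcc 0 1) := by
        rw [Set.uIcc_of_le zero_le_one, integrableOn_Icc_iff_integrableOn_Ioc]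
        exact aux_int_g 1
      have hco := intervalIntegral.continuousOn_primitive_interval hint
      have := (hco 0 (by rw [Set.uIcc_of_le zero_le_one]; exact ⟨le_rfl, zero_le_one⟩)).tendsto
      rw [intervalIntegral.integral_same] at this
      rw [Set.uIcc_of_le zero_le_one] at this
      exact this.mono_left hle
    have := (T1.sub T2).sub T3
    simpa using this
  -- conclude H x = 0
  have hHx : H x = 0 := by
    have hev : H =ᶠ[nhdsWithin 0 (Ioi 0)] (fun _ => H x) := by
      filter_upwards [Ioc_mem_nhdsGT_of_mem ⟨le_rfl, hx⟩] with a ha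
      exact (hconst a ha).symm
    have : Tendsto H (nhdsWithin 0 (Ioi 0)) (nhds (H x)) :=
      Tendsto.congr' hev.symm tendsto_const_nhds
    exact tendsto_nhds_unique this htend
  have hx1 : (∫ t in (0:ℝ)..x, f1 t) = ∫ t in Ioc 0 x, f1 t :=
    intervalIntegral.integral_of_le hx.le
  have hx2 : (∫ t in (0:ℝ)..x, g t) = ∫ t in Ioc 0 x, g t :=
    intervalIntegral.integral_of_le hx.le
  have := hHx
  rw [hHdef] at this
  simp only [hx1, hx2] at this
  linarith

lemma aux_ein_pt {t : ℝ} (ht : 0 < t) :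
    (1 - Real.exp (-t)) / t = ∑' k : ℕ, (-1)^k * t^k / (k+1).factorial := by
  have hsum0 : Summable (fun n : ℕ => (-t)^n / n.factorial) := by
    refine Summable.of_abs ?_
    refine (Real.summable_pow_div_factorial |t|).congr (fun n => ?_)
    rw [abs_div, abs_pow, abs_neg, Nat.abs_cast]
  have hexp : Real.exp (-t) = ∑' n : ℕ, (-t)^n / n.factorial := by
    rw [Real.exp_eq_exp_ℝ, NormedSpace.exp_eq_tsum_div]
  have hshift : Real.exp (-t) = 1 + ∑' k : ℕ, (-t)^(k+1) / (k+1).factorial := by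
    rw [hexp, Summable.tsum_eq_zero_add hsum0]
    norm_num
  have hsum1 : Summable (fun k : ℕ => (-t)^(k+1) / (k+1).factorial) :=
    (summable_nat_add_iff 1).mpr hsum0
  have hkey : ∑' k : ℕ, (-1)^k * t^(k+1) / (k+1).factorial = 1 - Real.exp (-t) := by
    have : ∀ k : ℕ, (-1:ℝ)^k * t^(k+1) / (k+1).factorial
        = -((-t)^(k+1) / (k+1).factorial) := by
      intro k
      rw [show (-t)^(k+1) = (-1:ℝ)^(k+1) * t^(k+1) by rw [neg_pow]]
      rw [pow_succ]
      ring
    rw [tsum_congr this, tsum_neg, hshift]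
    ring
  rw [div_eq_iff ht.ne']
  rw [← hkey, ← tsum_mul_right]
  refine tsum_congr (fun k => ?_)
  rw [div_mul_eq_mul_div, pow_succ]
  ring

lemma aux_series (x : ℝ) (hx : 0 < x) :
    ∫ t in Ioc 0 x, (1 - Real.exp (-t)) / t
      = ∑' k : ℕ, (-1)^k * x^(k+1) / ((k+1) * (k+1).factorial) := by
  set F : ℕ → ℝ → ℝ := fun k t => (-1)^k * t^k / (k+1).factorial with hF
  have hcont : ∀ k : ℕ, Continuous (F k) := by
    intro k
    exact (continuous_const.mul (continuous_pow k)).div_const _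
  have hFint : ∀ k : ℕ, Integrable (F k) (volume.restrict (Ioc 0 x)) := fun k =>
    (hcont k).integrableOn_Ioc
  have hFintval : ∀ k : ℕ, ∫ t in Ioc 0 x, F k t
      = (-1)^k * x^(k+1) / ((k+1) * (k+1).factorial) := by
    intro k
    rw [← intervalIntegral.integral_of_le hx.le]
    simp only [hF]
    rw [intervalIntegral.integral_div, intervalIntegral.integral_const_mul,
      integral_pow]
    rw [zero_pow (Nat.succ_ne_zero k)]
    field_simp
    ring
  have hFnorm : ∀ k : ℕ, ∫ t in Ioc 0 x, ‖F k t‖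
      = x^(k+1) / ((k+1) * (k+1).factorial) := by
    intro k
    have : ∀ t ∈ Ioc (0:ℝ) x, ‖F k t‖ = t^k / (k+1).factorial := by
      intro t ht
      simp only [hF]
      rw [Real.norm_eq_abs, abs_div, abs_mul, abs_pow, abs_pow, abs_neg, abs_one, one_pow,
        one_mul, abs_of_pos ht.1, Nat.abs_cast]
    rw [setIntegral_congr_fun measurableSet_Ioc this]
    rw [← intervalIntegral.integral_of_le hx.le, intervalIntegral.integral_div,
      integral_pow, zero_pow (Nat.succ_ne_zero k)]
    field_simp
    ring
  have hsum : Summable (fun k : ℕ => ∫ t in Ioc 0 x, ‖F k t‖) := by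
    refine Summable.of_nonneg_of_le (fun k => ?_) (fun k => ?_)
      ((summable_nat_add_iff 1).mpr (Real.summable_pow_div_factorial x))
    · rw [hFnorm k]; positivity
    · rw [hFnorm k]
      rw [div_le_div_iff₀ (by positivity) (by positivity)]
      have h1 : (1:ℝ) ≤ (k:ℝ)+1 := by
        have : (0:ℝ) ≤ (k:ℝ) := Nat.cast_nonneg k
        linarith
      have h2 : (0:ℝ) < ((k+1).factorial : ℝ) := by exact_mod_cast Nat.factorial_pos (k+1)
      exact mul_le_mul_of_nonneg_left (le_mul_of_one_le_left h2.le h1) (pow_pos hx (k+1)).le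
  have h := integral_tsum_of_summable_integral_norm hFint hsum
  calc ∫ t in Ioc 0 x, (1 - Real.exp (-t)) / t
      = ∫ t in Ioc 0 x, ∑' k : ℕ, F k t :=
        setIntegral_congr_fun measurableSet_Ioc (fun t ht => aux_ein_pt ht.1)
    _ = ∑' k : ℕ, ∫ t in Ioc 0 x, F k t := h.symm
    _ = ∑' k : ℕ, (-1)^k * x^(k+1) / ((k+1) * (k+1).factorial) := tsum_congr hFintval

-- (a) alternating binomial sum
lemma aux_alt (n : ℕ) :
    ∑ l ∈ Finset.range (n+1), (n.choose l : ℝ) * (-1)^l / (l+1) = 1/(n+1) := by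
  have halt : ∑ i ∈ Finset.range (n+2), (-1:ℝ)^i * ((n+1).choose i : ℝ) = 0 := by
    have h := Int.alternating_sum_range_choose (n := n+1)
    rw [if_neg (Nat.succ_ne_zero n)] at h
    exact_mod_cast congrArg (fun z : ℤ => (z : ℝ)) h
  have hsplit : ∑ i ∈ Finset.range (n+2), (-1:ℝ)^i * ((n+1).choose i : ℝ)
      = (∑ i ∈ Finset.range (n+1), (-1:ℝ)^(i+1) * ((n+1).choose (i+1) : ℝ)) + 1 := by
    rw [Finset.sum_range_succ' (fun i => (-1:ℝ)^i * ((n+1).choose i : ℝ)) (n+1)]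
    norm_num
  have hkey : ∑ i ∈ Finset.range (n+1), (-1:ℝ)^i * ((n+1).choose (i+1) : ℝ) = 1 := by
    have h2 : ∑ i ∈ Finset.range (n+1), (-1:ℝ)^(i+1) * ((n+1).choose (i+1) : ℝ)
        = -∑ i ∈ Finset.range (n+1), (-1:ℝ)^i * ((n+1).choose (i+1) : ℝ) := by
      rw [← Finset.sum_neg_distrib]
      refine Finset.sum_congr rfl (fun i _ => by rw [pow_succ]; ring)
    rw [hsplit, h2] at halt
    linarith
  rw [eq_div_iff (by positivity : ((n:ℝ)+1) ≠ 0), Finset.sum_mul]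
  calc ∑ l ∈ Finset.range (n+1), (n.choose l : ℝ) * (-1)^l / (l+1) * ((n:ℝ)+1)
      = ∑ l ∈ Finset.range (n+1), (-1:ℝ)^l * ((n+1).choose (l+1) : ℝ) := by
        refine Finset.sum_congr rfl (fun l hl => ?_)
        have hc : ((n+1) : ℕ) * n.choose l = (n+1).choose (l+1) * (l+1) := by
          exact_mod_cast Nat.add_one_mul_choose_eq n l
        have hcR : ((n:ℝ)+1) * (n.choose l : ℝ) = ((n+1).choose (l+1) : ℝ) * ((l:ℝ)+1) := by
          exact_mod_cast hc
        have hl1 : ((l:ℝ)+1) ≠ 0 := by positivity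
        field_simp
        linear_combination hcR
    _ = 1 := hkey

-- (b) binomial-harmonic identity
lemma aux_bh (n : ℕ) :
    ∑ i ∈ Finset.range n, (n.choose (i+1) : ℝ) * (-1)^i / (i+1)
      = ∑ j ∈ Finset.range n, (1:ℝ)/(j+1) := by
  induction n with
  | zero => simp
  | succ n ih =>
    have hsplit : ∑ i ∈ Finset.range (n+1), ((n+1).choose (i+1) : ℝ) * (-1)^i / (i+1)
        = (∑ i ∈ Finset.range (n+1), (n.choose i : ℝ) * (-1)^i / (i+1))
          + ∑ i ∈ Finset.range (n+1), (n.choose (i+1) : ℝ) * (-1)^i / (i+1) := by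
      rw [← Finset.sum_add_distrib]
      refine Finset.sum_congr rfl (fun i _ => ?_)
      rw [Nat.choose_succ_succ n i]
      push_cast
      ring
    have hlast : ∑ i ∈ Finset.range (n+1), (n.choose (i+1) : ℝ) * (-1)^i / (i+1)
        = ∑ i ∈ Finset.range n, (n.choose (i+1) : ℝ) * (-1)^i / (i+1) := by
      rw [Finset.sum_range_succ, Nat.choose_succ_self]
      norm_num
    rw [hsplit, hlast, aux_alt n, ih, Finset.sum_range_succ]
    push_cast
    ring

-- harmonic sum bound
lemma aux_H_le (p : ℕ) : ∑ j ∈ Finset.range p, (1:ℝ)/(j+1) ≤ p := by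
  calc ∑ j ∈ Finset.range p, (1:ℝ)/(j+1) ≤ ∑ j ∈ Finset.range p, (1:ℝ) := by
        refine Finset.sum_le_sum (fun j _ => ?_)
        rw [div_le_one (by positivity)]
        have : (0:ℝ) ≤ (j:ℝ) := Nat.cast_nonneg j
        linarith
    _ = p := by simp

lemma aux_H_nonneg (p : ℕ) : 0 ≤ ∑ j ∈ Finset.range p, (1:ℝ)/(j+1) :=
  Finset.sum_nonneg (fun j _ => by positivity)

-- summability of p * x^p / p!
lemma aux_summable_mul (x : ℝ) : Summable (fun p : ℕ => (p:ℝ) * x^p / p.factorial) := by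
  rw [← summable_nat_add_iff 1]
  have : (fun p : ℕ => ((p+1 : ℕ):ℝ) * x^(p+1) / (p+1).factorial)
      = fun p : ℕ => x * (x^p / p.factorial) := by
    funext p
    rw [Nat.factorial_succ]
    push_cast
    have h1 : ((p:ℝ)+1) ≠ 0 := by positivity
    have h2 : (p.factorial : ℝ) ≠ 0 := by exact_mod_cast (Nat.factorial_pos p).ne'
    field_simp
    ring
  rw [this]
  exact (Real.summable_pow_div_factorial x).mul_left x

lemma aux_summable (x : ℝ) : Summable (fun p : ℕ =>
    |(-γ + ∑ j ∈ Finset.range p, (1 : ℝ) / (j + 1)) / (Nat.factorial p : ℝ) * x ^ p|) := by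
  have hγ : (0:ℝ) < γ := lt_trans one_half_pos Real.one_half_lt_eulerMascheroniConstant
  have hbig : Summable (fun p : ℕ => γ * (|x|^p / p.factorial) + (p:ℝ) * |x|^p / p.factorial) :=
    ((Real.summable_pow_div_factorial |x|).mul_left γ).add (aux_summable_mul |x|)
  refine Summable.of_nonneg_of_le (fun p => abs_nonneg _) (fun p => ?_) hbig
  have h1 : |(-γ + ∑ j ∈ Finset.range p, (1 : ℝ) / (j + 1))| ≤ γ + p := by
    rw [abs_le]
    constructor
    · have := aux_H_nonneg p
      have : -(γ + p) ≤ -γ := by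
        have : (0:ℝ) ≤ (p:ℝ) := Nat.cast_nonneg p
        linarith
      linarith [aux_H_nonneg p]
    · have := aux_H_le p
      linarith
  rw [abs_mul, abs_div, abs_pow, Nat.abs_cast]
  have hfp : (0:ℝ) < (p.factorial : ℝ) := by exact_mod_cast Nat.factorial_pos p
  calc |(-γ + ∑ j ∈ Finset.range p, (1 : ℝ) / (j + 1))| / (p.factorial:ℝ) * |x|^p
      ≤ (γ + p) / (p.factorial:ℝ) * |x|^p := by
        apply mul_le_mul_of_nonneg_right _ (pow_nonneg (abs_nonneg x) p)
        exact div_le_div_of_nonneg_right h1 hfp.le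
    _ = γ * (|x|^p / p.factorial) + (p:ℝ) * |x|^p / p.factorial := by ring

lemma aux_cauchy (x : ℝ) (hx : 0 < x) :
    ∑' p : ℕ, (-γ + ∑ j ∈ Finset.range p, (1 : ℝ) / (j + 1)) / (Nat.factorial p : ℝ) * x ^ p
      = Real.exp x * (-γ + ∑' k : ℕ, (-1)^k * x^(k+1) / ((k+1) * (k+1).factorial)) := by
  classical
  set c : ℕ → ℝ := fun k => match k with
    | 0 => 0
    | (k+1) => (-1)^k * x^(k+1) / ((k+1) * (k+1).factorial) with hc
  set f : ℕ → ℝ := fun p => x^p / p.factorial with hf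
  have hexp : Real.exp x = ∑' p : ℕ, f p := by
    rw [Real.exp_eq_exp_ℝ, NormedSpace.exp_eq_tsum_div]
  have hsf : Summable (fun p : ℕ => ‖f p‖) := by
    refine (Real.summable_pow_div_factorial x).congr (fun p => ?_)
    rw [Real.norm_eq_abs, abs_of_pos (by positivity)]
  have hsc : Summable (fun k : ℕ => ‖c k‖) := by
    refine Summable.of_nonneg_of_le (fun k => norm_nonneg _) (fun k => ?_)
      (Real.summable_pow_div_factorial x)
    match k with
    | 0 => simp [hc]
    | (k+1) =>
      simp only [hc]
      rw [Real.norm_eq_abs, abs_div, abs_mul, abs_pow, abs_pow, abs_neg, abs_one, one_pow,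
        one_mul, abs_of_pos hx]
      have h1 : (0:ℝ) < (k:ℝ)+1 := by positivity
      have h2 : (0:ℝ) < ((k+1).factorial : ℝ) := by exact_mod_cast Nat.factorial_pos (k+1)
      rw [abs_of_pos (by positivity : (0:ℝ) < ((k:ℝ)+1) * ((k+1).factorial:ℝ))]
      apply div_le_div_of_nonneg_left (by positivity) h2
      nlinarith
  -- shift the tsum for c
  have hS : ∑' k : ℕ, (-1)^k * x^(k+1) / ((k+1) * (k+1).factorial) = ∑' k : ℕ, c k := by
    rw [Summable.tsum_eq_zero_add hsc.of_norm]
    simp only [hc]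
    norm_num
  -- Cauchy product
  have hprod : (∑' k : ℕ, c k) * (∑' p : ℕ, f p)
      = ∑' p : ℕ, ∑ kl ∈ Finset.HasAntidiagonal.antidiagonal p, c kl.1 * f kl.2 :=
    tsum_mul_tsum_eq_tsum_sum_antidiagonal_of_summable_norm hsc hsf
  -- coefficient identity
  have hcoef : ∀ p : ℕ, ∑ kl ∈ Finset.HasAntidiagonal.antidiagonal p, c kl.1 * f kl.2
      = (∑ j ∈ Finset.range p, (1:ℝ)/(j+1)) / p.factorial * x^p := by
    intro p
    rw [Finset.Nat.sum_antidiagonal_eq_sum_range_succ_mk]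
    rw [Finset.sum_range_succ' (fun k => c k * f (p - k)) p]
    have hc0 : c 0 = 0 := rfl
    rw [hc0, zero_mul, add_zero]
    have hterm : ∀ i ∈ Finset.range p, c (i+1) * f (p - (i+1))
        = (p.choose (i+1) : ℝ) * (-1)^i / (i+1) * (x^p / p.factorial) := by
      intro i hi
      have hip : i + 1 ≤ p := Finset.mem_range.mp hi
      have e1 : x^(i+1) * x^(p-(i+1)) = x^p := by
        rw [← pow_add, Nat.add_sub_cancel' hip]
      have hfactR : (p.choose (i+1) : ℝ) * ((i+1).factorial : ℝ) * ((p-(i+1)).factorial : ℝ)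
          = (p.factorial : ℝ) := by
        exact_mod_cast congrArg (fun m : ℕ => (m : ℝ))
          (Nat.choose_mul_factorial_mul_factorial hip)
      have h1 : ((i:ℝ)+1) ≠ 0 := by positivity
      have h2 : ((i+1).factorial : ℝ) ≠ 0 := by
        exact_mod_cast (Nat.factorial_pos (i+1)).ne'
      have h3 : ((p-(i+1)).factorial : ℝ) ≠ 0 := by
        exact_mod_cast (Nat.factorial_pos (p-(i+1))).ne'
      have h4 : (p.factorial : ℝ) ≠ 0 := by exact_mod_cast (Nat.factorial_pos p).ne'
      have h5 : (p.choose (i+1) : ℝ) ≠ 0 := by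
        exact_mod_cast (Nat.choose_pos hip).ne'
      simp only [hc, hf]
      rw [← hfactR]
      field_simp
      linear_combination e1
    rw [Finset.sum_congr rfl hterm, ← Finset.sum_mul, aux_bh p]
    ring
  -- summabilities for splitting
  have S0 : Summable (fun p : ℕ =>
      (-γ + ∑ j ∈ Finset.range p, (1 : ℝ) / (j + 1)) / (p.factorial : ℝ) * x ^ p) :=
    (aux_summable x).of_abs
  have S1 : Summable (fun p : ℕ => γ * f p) := hsf.of_norm.mul_left γ
  have S2 : Summable (fun p : ℕ =>
      (∑ j ∈ Finset.range p, (1 : ℝ) / (j + 1)) / (p.factorial : ℝ) * x ^ p) := by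
    refine (S0.add S1).congr (fun p => ?_)
    simp only [hf]
    ring
  have hsplit : ∑' p : ℕ, (-γ + ∑ j ∈ Finset.range p, (1 : ℝ) / (j + 1))
        / (p.factorial : ℝ) * x ^ p
      = (∑' p : ℕ, -γ * f p)
        + ∑' p : ℕ, (∑ j ∈ Finset.range p, (1 : ℝ) / (j + 1)) / (p.factorial : ℝ) * x ^ p := by
    rw [← Summable.tsum_add (S1.neg.congr (fun p => by ring)) S2]
    refine tsum_congr (fun p => ?_)
    simp only [hf]
    ring
  rw [hsplit, hS]
  rw [tsum_congr (fun p => (hcoef p).symm), ← hprod]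
  rw [tsum_mul_left, ← hexp]
  ring

/-- For every real `x > 0`, `∑_{p=0}^∞ [ψ(p+1)/p!]·x^p = e^x·(Γ(0,x) + ln x)`,
where `ψ(p+1) = −γ + ∑_{j=1}^p 1/j` is the digamma function at `p+1`
(`γ` the Euler–Mascheroni constant) and `Γ(0,x) = ∫_x^∞ e^{−t}/t dt`;
the series converges absolutely. -/
theorem digamma_series_eq_exp_mul_incGamma (x : ℝ) (hx : 0 < x) :
    Summable (fun p : ℕ =>
      |(-Real.eulerMascheroniConstant + ∑ j ∈ Finset.range p, (1 : ℝ) / (j + 1))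
        / (Nat.factorial p : ℝ) * x ^ p|) ∧
    ∑' p : ℕ, (-Real.eulerMascheroniConstant + ∑ j ∈ Finset.range p, (1 : ℝ) / (j + 1))
        / (Nat.factorial p : ℝ) * x ^ p
      = Real.exp x * ((∫ t in Ioi x, Real.exp (-t) / t) + Real.log x) := by
  refine ⟨aux_summable x, ?_⟩
  rw [aux_cauchy x hx]
  congr 1
  rw [aux_parts x hx, aux_split x hx, ← aux_series x hx, ← aux_key x hx]
  ring
end
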